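/- arXiv:2009.03452 — 4 statements merged into one kernel-verified Lean document; each statement's English description precedes it below -/
import Mathlib

section
/- For each N, let [u,v]_N = Σ_{n=1}^N r_{n,N} u(x_{n,N}) v(x_{n,N}) be discrete inner products with nonnegative weights, and assume [u,v]_N → ⟨u,v⟩ as N → ∞ for all u, v ∈ ℙ_d(ℝ^q), where ⟨u,v⟩ = ∫_Ω u v ω dx. Let (u_N) and (v_N) be sequences in ℙ_d(ℝ^q) converging uniformly on the bounded domain Ω to u, v ∈ ℙ_d(ℝ^q) respectively. Then [u_N, v_N]_N → ⟨u, v⟩ as N → ∞. -/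
open MvPolynomial MeasureTheory Filter

/-- Lemma 4 of the paper: if the discrete inner products converge to the
continuous one on `ℙ_d(ℝ^q)` and `u_N → u`, `v_N → v` uniformly on the bounded
domain `Ω`, then `[u_N, v_N]_N → ⟨u, v⟩`. -/
theorem discrete_inner_product_limit (q d : ℕ) (Ω : Set (Fin q → ℝ))
    (hbdd : Bornology.IsBounded Ω)
    (ω : (Fin q → ℝ) → ℝ) (hω : ∀ y ∈ Ω, 0 ≤ ω y)
    (hωint : IntegrableOn ω Ω)
    (x : (N : ℕ) → Fin N → (Fin q → ℝ)) (hx : ∀ N n, x N n ∈ Ω)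
    (r : (N : ℕ) → Fin N → ℝ) (hr : ∀ N n, 0 ≤ r N n)
    (hconv : ∀ f ∈ restrictTotalDegree (Fin q) ℝ d,
      ∀ g ∈ restrictTotalDegree (Fin q) ℝ d,
      Tendsto (fun N => ∑ n, r N n * eval (x N n) f * eval (x N n) g)
        atTop (nhds (∫ y in Ω, eval y f * eval y g * ω y)))
    (uN vN : ℕ → MvPolynomial (Fin q) ℝ) (u v : MvPolynomial (Fin q) ℝ)
    (huN : ∀ N, uN N ∈ restrictTotalDegree (Fin q) ℝ d)
    (hvN : ∀ N, vN N ∈ restrictTotalDegree (Fin q) ℝ d)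
    (hu : u ∈ restrictTotalDegree (Fin q) ℝ d)
    (hv : v ∈ restrictTotalDegree (Fin q) ℝ d)
    (huconv : TendstoUniformlyOn (fun N y => eval y (uN N))
      (fun y => eval y u) atTop Ω)
    (hvconv : TendstoUniformlyOn (fun N y => eval y (vN N))
      (fun y => eval y v) atTop Ω) :
    Tendsto (fun N => ∑ n, r N n * eval (x N n) (uN N) * eval (x N n) (vN N))
      atTop (nhds (∫ y in Ω, eval y u * eval y v * ω y)) := by
  classical
  -- the constant polynomial 1 has total degree 0
  have h1 : (1 : MvPolynomial (Fin q) ℝ) ∈ restrictTotalDegree (Fin q) ℝ d := by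
    rw [mem_restrictTotalDegree]
    simp
  -- total discrete mass converges
  have hS : Tendsto (fun N => ∑ n, r N n) atTop (nhds (∫ y in Ω, ω y)) := by
    have := hconv 1 h1 1 h1
    simpa using this
  set L : ℝ := ∫ y in Ω, ω y with hLdef
  have hL0 : 0 ≤ L := by
    refine ge_of_tendsto hS (Eventually.of_forall fun N => ?_)
    exact Finset.sum_nonneg fun n _ => hr N n
  have hSbd : ∀ᶠ N in atTop, ∑ n, r N n ≤ L + 1 :=
    (hS.eventually_lt_const (lt_add_one L)).mono fun N h => le_of_lt h
  -- bounds for `u` and `v` on the closure of Ω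
  have hcomp : IsCompact (closure Ω) :=
    Metric.isCompact_of_isClosed_isBounded isClosed_closure hbdd.closure
  obtain ⟨Mu, hMu⟩ := hcomp.exists_bound_of_continuousOn
    (MvPolynomial.continuous_eval (p := u)).continuousOn
  obtain ⟨Mv, hMv⟩ := hcomp.exists_bound_of_continuousOn
    (MvPolynomial.continuous_eval (p := v)).continuousOn
  set Mu' : ℝ := |Mu| with hMu'def
  set Mv' : ℝ := |Mv| with hMv'def
  have hMu' : ∀ y ∈ Ω, |eval y u| ≤ Mu' := fun y hy =>
    le_trans (by simpa [Real.norm_eq_abs] using hMu y (subset_closure hy)) (le_abs_self Mu)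
  have hMv' : ∀ y ∈ Ω, |eval y v| ≤ Mv' := fun y hy =>
    le_trans (by simpa [Real.norm_eq_abs] using hMv y (subset_closure hy)) (le_abs_self Mv)
  set C : ℝ := Mu' + Mv' + 1 with hCdef
  have hC1 : 1 ≤ C := by
    have := abs_nonneg Mu
    have := abs_nonneg Mv
    simp only [hCdef]
    linarith
  -- difference tends to zero
  have hA := hconv u hu v hv
  have hdiff : Tendsto (fun N =>
      (∑ n, r N n * eval (x N n) (uN N) * eval (x N n) (vN N))
      - (∑ n, r N n * eval (x N n) u * eval (x N n) v)) atTop (nhds 0) := by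
    rw [NormedAddCommGroup.tendsto_nhds_zero]
    intro ε hε
    set δ : ℝ := min 1 (ε / ((L + 1) * C + 1)) with hδdef
    have hden : 0 < (L + 1) * C + 1 := by nlinarith
    have hδ0 : 0 < δ := lt_min one_pos (div_pos hε hden)
    have hδ1 : δ ≤ 1 := min_le_left _ _
    have hδε : δ ≤ ε / ((L + 1) * C + 1) := min_le_right _ _
    have hu' := (Metric.tendstoUniformlyOn_iff.mp huconv δ hδ0)
    have hv' := (Metric.tendstoUniformlyOn_iff.mp hvconv δ hδ0)
    filter_upwards [hSbd, hu', hv'] with N hSN huN' hvN'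
    have hterm : ∀ n : Fin N,
        |r N n * eval (x N n) (uN N) * eval (x N n) (vN N)
          - r N n * eval (x N n) u * eval (x N n) v| ≤ r N n * (δ * C) := by
      intro n
      set y := x N n with hy
      have hyΩ : y ∈ Ω := hx N n
      set a := eval y (uN N)
      set b := eval y (vN N)
      set a0 := eval y u
      set b0 := eval y v
      have h1 : |a0 - a| < δ := by
        have := huN' y hyΩ
        rwa [Real.dist_eq] at this
      have h2 : |b0 - b| < δ := by
        have := hvN' y hyΩ
        rwa [Real.dist_eq] at this
      have ha0 : |a0| ≤ Mu' := hMu' y hyΩ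
      have hb0 : |b0| ≤ Mv' := hMv' y hyΩ
      have hb : |b| ≤ Mv' + 1 := by
        have : |b| ≤ |b0| + |b0 - b| := by
          have := abs_sub_abs_le_abs_sub b b0
          have h := abs_sub_comm b b0
          linarith [abs_sub_abs_le_abs_sub b b0, (abs_sub_comm b0 b).le]
        linarith
      have key : |a * b - a0 * b0| ≤ δ * C := by
        have hrw : a * b - a0 * b0 = (a - a0) * b + a0 * (b - b0) := by ring
        have : |a * b - a0 * b0| ≤ |a - a0| * |b| + |a0| * |b - b0| := by
          rw [hrw]
          calc |(a - a0) * b + a0 * (b - b0)|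
              ≤ |(a - a0) * b| + |a0 * (b - b0)| := abs_add_le _ _
            _ = |a - a0| * |b| + |a0| * |b - b0| := by rw [abs_mul, abs_mul]
        have h1' : |a - a0| ≤ δ := by rw [abs_sub_comm]; exact h1.le
        have h2' : |b - b0| ≤ δ := by rw [abs_sub_comm]; exact h2.le
        have hbnn : (0:ℝ) ≤ |b| := abs_nonneg _
        have ha0nn : (0:ℝ) ≤ |a0| := abs_nonneg _
        calc |a * b - a0 * b0| ≤ |a - a0| * |b| + |a0| * |b - b0| := this
          _ ≤ δ * (Mv' + 1) + Mu' * δ := by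
              gcongr
          _ = δ * C := by simp only [hCdef]; ring
      calc |r N n * a * b - r N n * a0 * b0|
          = r N n * |a * b - a0 * b0| := by
            rw [show r N n * a * b - r N n * a0 * b0 = r N n * (a * b - a0 * b0) by ring,
              abs_mul, abs_of_nonneg (hr N n)]
        _ ≤ r N n * (δ * C) := by
            exact mul_le_mul_of_nonneg_left key (hr N n)
    have hsum : ‖(∑ n, r N n * eval (x N n) (uN N) * eval (x N n) (vN N))
        - (∑ n, r N n * eval (x N n) u * eval (x N n) v)‖
        ≤ (∑ n, r N n) * (δ * C) := by
      rw [Real.norm_eq_abs, ← Finset.sum_sub_distrib]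
      calc |∑ n, (r N n * eval (x N n) (uN N) * eval (x N n) (vN N)
              - r N n * eval (x N n) u * eval (x N n) v)|
          ≤ ∑ n, |r N n * eval (x N n) (uN N) * eval (x N n) (vN N)
              - r N n * eval (x N n) u * eval (x N n) v| := Finset.abs_sum_le_sum_abs _ _
        _ ≤ ∑ n : Fin N, r N n * (δ * C) := Finset.sum_le_sum fun n _ => hterm n
        _ = (∑ n, r N n) * (δ * C) := by rw [← Finset.sum_mul]
    have hSnn : 0 ≤ ∑ n, r N n := Finset.sum_nonneg fun n _ => hr N n
    calc ‖_ - _‖ ≤ (∑ n, r N n) * (δ * C) := hsum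
      _ ≤ (L + 1) * (δ * C) := by
          have : 0 ≤ δ * C := mul_nonneg hδ0.le (by linarith)
          exact mul_le_mul_of_nonneg_right hSN this
      _ < ε := by
          have hδε' : δ * ((L + 1) * C + 1) ≤ ε := by
            rw [← le_div_iff₀ hden]; exact hδε
          nlinarith
  have := hdiff.add hA
  simpa using this
end

section
/- Assume the discrete inner products [·,·]_N converge to the continuous inner product ⟨u,v⟩ = ∫_Ω u v ω dx for all u, v ∈ ℙ_d(ℝ^q), that ⟨·,·⟩ is positive definite on ℙ_d(ℝ^q), and that for all sufficiently large N the [·,·]_N are positive definite on ℙ_d(ℝ^q). Let π_k(·; r_N) and π_k(·; ω), k = 1,…,K, be the orthonormal polynomials obtained by Gram–Schmidt orthogonalization of a fixed ordered monomial basis of ℙ_d(ℝ^q) with respect to [·,·]_N and ⟨·,·⟩, respectively. Then π_k(·; r_N) → π_k(·; ω) uniformly on the bounded domain Ω as N → ∞, for each k = 1,…,K. -/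
open MvPolynomial MeasureTheory Filter

namespace GSAux

open Filter Matrix Submodule


variable {K : ℕ}

noncomputable def wvec (G : Matrix (Fin K) (Fin K) ℝ) (a : Fin K → Fin K → ℝ) (k : Fin K) :
    Fin K → ℝ :=
  Pi.single k 1 - ∑ j ∈ Finset.univ.filter (· < k),
    ((Pi.single k 1 : Fin K → ℝ) ⬝ᵥ G.mulVec (a j)) • a j

theorem dot_tendsto {GN : ℕ → Matrix (Fin K) (Fin K) ℝ} {G : Matrix (Fin K) (Fin K) ℝ}
    (hG : ∀ i j, Tendsto (fun N => GN N i j) atTop (nhds (G i j)))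
    {uN vN : ℕ → Fin K → ℝ} {u v : Fin K → ℝ}
    (hu : ∀ i, Tendsto (fun N => uN N i) atTop (nhds (u i)))
    (hv : ∀ i, Tendsto (fun N => vN N i) atTop (nhds (v i))) :
    Tendsto (fun N => uN N ⬝ᵥ (GN N).mulVec (vN N)) atTop (nhds (u ⬝ᵥ G.mulVec v)) := by
  simp only [dotProduct, Matrix.mulVec]
  exact tendsto_finset_sum _ fun i _ =>
    (hu i).mul (tendsto_finset_sum _ fun j _ => (hG i j).mul (hv j))

theorem sum_smul_dot (s : Finset (Fin K)) (c : Fin K → ℝ) (a : Fin K → Fin K → ℝ)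
    (G : Matrix (Fin K) (Fin K) ℝ) (v : Fin K → ℝ) :
    (∑ j ∈ s, c j • a j) ⬝ᵥ G.mulVec v = ∑ j ∈ s, c j * (a j ⬝ᵥ G.mulVec v) := by
  simp only [dotProduct, Finset.sum_apply, Pi.smul_apply, smul_eq_mul,
    Finset.sum_mul, Finset.mul_sum]
  rw [Finset.sum_comm]
  exact Finset.sum_congr rfl fun j _ => Finset.sum_congr rfl fun i _ => by ring

theorem gs_formula (G : Matrix (Fin K) (Fin K) ℝ) (a : Fin K → Fin K → ℝ)
    (horth : ∀ k l, a k ⬝ᵥ G.mulVec (a l) = if k = l then 1 else 0)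
    (htri : ∀ k i, k < i → a k i = 0)
    (hdiag : ∀ k, 0 < a k k) (k : Fin K) :
    0 < wvec G a k ⬝ᵥ G.mulVec (wvec G a k) ∧
      a k = (Real.sqrt (wvec G a k ⬝ᵥ G.mulVec (wvec G a k)))⁻¹ • wvec G a k := by
  classical
  -- orthogonality of w to earlier a's
  have hworth : ∀ l, l < k → wvec G a k ⬝ᵥ G.mulVec (a l) = 0 := by
    intro l hl
    rw [wvec, sub_dotProduct, sum_smul_dot]
    simp only [horth, mul_ite, mul_one, mul_zero, Finset.sum_ite_eq',
      Finset.mem_filter, Finset.mem_univ, true_and]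
    rw [if_pos hl, sub_self]
  -- single k ∈ span of a's up to k
  have hsingle : ∀ n : ℕ, ∀ k : Fin K, k.val < n →
      (Pi.single k 1 : Fin K → ℝ) ∈ span ℝ (a '' {l | l ≤ k}) := by
    intro n
    induction n with
    | zero => intro k hk; omega
    | succ n IH =>
      intro k hk
      have hrep : (Pi.single k 1 : Fin K → ℝ)
          = (a k k)⁻¹ • (a k - ∑ i ∈ Finset.univ.filter (· < k),
              a k i • (Pi.single i 1 : Fin K → ℝ)) := by
        funext i
        simp only [Pi.smul_apply, Pi.sub_apply, Finset.sum_apply, Pi.smul_apply,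
          smul_eq_mul]
        have hsum : ∑ j ∈ Finset.univ.filter (· < k), a k j * (Pi.single j 1 : Fin K → ℝ) i
            = if i < k then a k i else 0 := by
          simp only [Pi.single_apply, mul_ite, mul_one, mul_zero, Finset.sum_ite_eq,
            Finset.mem_filter, Finset.mem_univ, true_and]
        rw [hsum]
        rcases lt_trichotomy i k with h | h | h
        · rw [if_pos h, Pi.single_eq_of_ne (ne_of_lt h)]
          field_simp
          simp
        · subst h
          rw [if_neg (lt_irrefl i), Pi.single_eq_same, sub_zero,
            inv_mul_cancel₀ (ne_of_gt (hdiag i))]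
        · rw [if_neg (not_lt_of_gt h), Pi.single_eq_of_ne (ne_of_gt h),
            htri k i h, sub_zero, mul_zero]
      rw [hrep]
      refine Submodule.smul_mem _ _ (Submodule.sub_mem _ ?_ (Submodule.sum_mem _ ?_))
      · exact subset_span ⟨k, le_refl k, rfl⟩
      · intro i hi
        have hik : i < k := (Finset.mem_filter.1 hi).2
        refine Submodule.smul_mem _ _ ?_
        have := IH i (by omega)
        refine span_mono (Set.image_mono ?_) this
        intro l hl
        exact le_of_lt (lt_of_le_of_lt hl hik)
  have hbelow : ∀ (v : Fin K → ℝ), (∀ i, ¬ i < k → v i = 0) →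
      v ∈ span ℝ (a '' {l | l < k}) := by
    intro v hv
    have hrep : v = ∑ i ∈ Finset.univ.filter (· < k), v i • (Pi.single i 1 : Fin K → ℝ) := by
      funext i
      simp only [Finset.sum_apply, Pi.smul_apply, smul_eq_mul]
      simp only [Pi.single_apply, mul_ite, mul_one, mul_zero, Finset.sum_ite_eq,
        Finset.mem_filter, Finset.mem_univ, true_and]
      by_cases hik : i < k
      · rw [if_pos hik]
      · rw [if_neg hik, hv i hik]
    rw [hrep]
    refine Submodule.sum_mem _ fun i hi => Submodule.smul_mem _ _ ?_
    have hik : i < k := (Finset.mem_filter.1 hi).2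
    refine span_mono (Set.image_mono ?_) (hsingle (i.val + 1) i (by omega))
    intro l hl
    exact lt_of_le_of_lt hl hik
  -- w at coordinate k is 1
  have hwk : wvec G a k k = 1 := by
    simp only [wvec, Pi.sub_apply, Pi.single_eq_same, Finset.sum_apply, Pi.smul_apply,
      smul_eq_mul]
    rw [Finset.sum_eq_zero fun j hj => by
      rw [htri j k (Finset.mem_filter.1 hj).2, mul_zero], sub_zero]
  -- v := a k - (a k k) • w vanishes
  set w := wvec G a k with hw
  have hv0 : a k - (a k k) • w = 0 := by
    set v := a k - (a k k) • w with hvdef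
    have hsupp : ∀ i, ¬ i < k → v i = 0 := by
      intro i hik
      rcases eq_or_lt_of_le (le_of_not_gt hik) with h | h
      · simp only [hvdef, Pi.sub_apply, Pi.smul_apply, smul_eq_mul]
        rw [← h, hwk, mul_one, sub_self]
      · simp only [hvdef, Pi.sub_apply, Pi.smul_apply, smul_eq_mul]
        rw [htri k i h]
        have hwi : w i = 0 := by
          simp only [hw, wvec, Pi.sub_apply, Finset.sum_apply, Pi.smul_apply, smul_eq_mul,
            Pi.single_eq_of_ne (ne_of_gt h)]
          rw [Finset.sum_eq_zero fun j hj =>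
            by rw [htri j i (lt_trans (Finset.mem_filter.1 hj).2 h), mul_zero], sub_zero]
        rw [hwi, mul_zero, sub_zero]
    have hvorth : ∀ l, l < k → v ⬝ᵥ G.mulVec (a l) = 0 := by
      intro l hl
      rw [hvdef, sub_dotProduct, smul_dotProduct, horth,
        if_neg (ne_of_gt hl), hworth l hl, smul_zero, sub_zero]
    have hmem := hbelow v hsupp
    rcases (Finsupp.mem_span_image_iff_linearCombination ℝ).1 hmem with ⟨c, hcs, hcv⟩
    have hczero : c = 0 := by
      ext j
      by_cases hj : j ∈ c.support
      · have hjk : j < k := hcs hj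
        have : v ⬝ᵥ G.mulVec (a j) = c j := by
          rw [← hcv, Finsupp.linearCombination_apply, Finsupp.sum, sum_smul_dot]
          simp only [horth, mul_ite, mul_one, mul_zero, Finset.sum_ite_eq']
          rw [if_pos hj]
        rw [hvorth j hjk] at this
        exact this.symm
      · exact Finsupp.notMem_support_iff.1 hj
    rw [← hcv, hczero] at *
    simp
  have hak : a k = (a k k) • w := by
    have := sub_eq_zero.1 hv0
    exact this
  have hnorm : (a k k) * (a k k) * (w ⬝ᵥ G.mulVec w) = 1 := by
    have h1 := horth k k
    rw [if_pos rfl] at h1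
    rw [hak] at h1
    rw [smul_dotProduct, Matrix.mulVec_smul, dotProduct_smul] at h1
    simpa [mul_assoc, smul_eq_mul] using h1
  have hpos : 0 < w ⬝ᵥ G.mulVec w := by
    rcases lt_trichotomy (w ⬝ᵥ G.mulVec w) 0 with h | h | h
    · nlinarith [hdiag k]
    · rw [h, mul_zero] at hnorm; norm_num at hnorm
    · exact h
  refine ⟨hpos, ?_⟩
  have hsqrt : a k k = (Real.sqrt (w ⬝ᵥ G.mulVec w))⁻¹ := by
    have h2 : (a k k)^2 = ((Real.sqrt (w ⬝ᵥ G.mulVec w))⁻¹)^2 := by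
      rw [inv_pow, Real.sq_sqrt (le_of_lt hpos)]
      field_simp
      nlinarith [hnorm]
    have hrpos : (0:ℝ) < (Real.sqrt (w ⬝ᵥ G.mulVec w))⁻¹ :=
      inv_pos.2 (Real.sqrt_pos.2 hpos)
    nlinarith [hdiag k, h2, hrpos]
  rw [hak, hsqrt]



set_option maxHeartbeats 1000000 in
theorem gs_conv {GN : ℕ → Matrix (Fin K) (Fin K) ℝ} {G : Matrix (Fin K) (Fin K) ℝ}
    (hG : ∀ i j, Tendsto (fun N => GN N i j) atTop (nhds (G i j)))
    {aN : ℕ → Fin K → Fin K → ℝ} {a : Fin K → Fin K → ℝ} (N₂ : ℕ)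
    (horthN : ∀ N ≥ N₂, ∀ k l, aN N k ⬝ᵥ (GN N).mulVec (aN N l) = if k = l then 1 else 0)
    (htriN : ∀ N ≥ N₂, ∀ k i, k < i → aN N k i = 0)
    (hdiagN : ∀ N ≥ N₂, ∀ k, 0 < aN N k k)
    (horth : ∀ k l, a k ⬝ᵥ G.mulVec (a l) = if k = l then 1 else 0)
    (htri : ∀ k i, k < i → a k i = 0)
    (hdiag : ∀ k, 0 < a k k) :
    ∀ k i, Tendsto (fun N => aN N k i) atTop (nhds (a k i)) := by
  have main : ∀ n : ℕ, ∀ k : Fin K, k.val < n →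
      ∀ i, Tendsto (fun N => aN N k i) atTop (nhds (a k i)) := by
    intro n
    induction n with
    | zero => intro k hk; omega
    | succ n IH =>
      intro k hk i
      have hwc : ∀ i, Tendsto (fun N => wvec (GN N) (aN N) k i) atTop
          (nhds (wvec G a k i)) := by
        intro i
        simp only [wvec, Pi.sub_apply, Finset.sum_apply, Pi.smul_apply, smul_eq_mul]
        refine Tendsto.sub tendsto_const_nhds (tendsto_finset_sum _ fun j hj => ?_)
        have hjk : j < k := (Finset.mem_filter.1 hj).2
        have haj : ∀ i, Tendsto (fun N => aN N j i) atTop (nhds (a j i)) :=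
          IH j (by omega)
        exact (dot_tendsto (uN := fun _ => (Pi.single k 1 : Fin K → ℝ)) (u := (Pi.single k 1 : Fin K → ℝ)) hG (fun _ => tendsto_const_nhds) haj).mul (haj i)
      have hsc : Tendsto
          (fun N => wvec (GN N) (aN N) k ⬝ᵥ (GN N).mulVec (wvec (GN N) (aN N) k))
          atTop (nhds (wvec G a k ⬝ᵥ G.mulVec (wvec G a k))) :=
        dot_tendsto hG hwc hwc
      obtain ⟨hpos, hfor⟩ := gs_formula G a horth htri hdiag k
      have hsne : Real.sqrt (wvec G a k ⬝ᵥ G.mulVec (wvec G a k)) ≠ 0 :=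
        ne_of_gt (Real.sqrt_pos.2 hpos)
      have hlim : Tendsto (fun N =>
          (Real.sqrt (wvec (GN N) (aN N) k ⬝ᵥ (GN N).mulVec (wvec (GN N) (aN N) k)))⁻¹
            * wvec (GN N) (aN N) k i) atTop
          (nhds ((Real.sqrt (wvec G a k ⬝ᵥ G.mulVec (wvec G a k)))⁻¹ * wvec G a k i)) :=
        (((Real.continuous_sqrt.tendsto _).comp hsc).inv₀ hsne).mul (hwc i)
      have heq : (Real.sqrt (wvec G a k ⬝ᵥ G.mulVec (wvec G a k)))⁻¹ * wvec G a k i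
          = a k i := by
        conv_rhs => rw [hfor]
        rfl
      rw [heq] at hlim
      refine Tendsto.congr' ?_ hlim
      filter_upwards [eventually_ge_atTop N₂] with N hN
      obtain ⟨_, hfN⟩ := gs_formula (GN N) (aN N) (horthN N hN) (htriN N hN) (hdiagN N hN) k
      rw [hfN]
      rfl
  exact fun k => main (k.val + 1) k (by omega)

theorem sum_eval_expand {n : ℕ} (s : Fin n → ℝ) (E : Fin n → Fin K → ℝ) (u v : Fin K → ℝ) :
    ∑ m, s m * (∑ i, u i * E m i) * (∑ j, v j * E m j)
      = u ⬝ᵥ (Matrix.of fun i j => ∑ m, s m * E m i * E m j).mulVec v := by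
  simp only [dotProduct, Matrix.mulVec, Matrix.of_apply, Finset.sum_mul,
    Finset.mul_sum]
  calc ∑ m : Fin n, ∑ j : Fin K, ∑ i : Fin K, s m * (u i * E m i) * (v j * E m j)
      = ∑ j : Fin K, ∑ m : Fin n, ∑ i : Fin K, s m * (u i * E m i) * (v j * E m j) :=
        Finset.sum_comm
    _ = ∑ j : Fin K, ∑ i : Fin K, ∑ m : Fin n, s m * (u i * E m i) * (v j * E m j) :=
        Finset.sum_congr rfl fun j _ => Finset.sum_comm
    _ = ∑ i : Fin K, ∑ j : Fin K, ∑ m : Fin n, s m * (u i * E m i) * (v j * E m j) :=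
        Finset.sum_comm
    _ = ∑ i : Fin K, ∑ j : Fin K, ∑ m : Fin n, u i * (s m * E m i * E m j * v j) :=
        Finset.sum_congr rfl fun i _ => Finset.sum_congr rfl fun j _ =>
          Finset.sum_congr rfl fun m _ => by ring

end GSAux


/-- Lemma 5 of the paper: if the discrete inner products converge to the
continuous one on `ℙ_d(ℝ^q)`, then the discrete orthonormal polynomials
obtained by Gram--Schmidt from a fixed ordered monomial basis converge
uniformly on `Ω` to the continuous orthonormal polynomials. The Gram--Schmidt
output is characterized by orthonormality together with
`π_k ∈ c_k e_k + span{e_1, …, e_{k-1}}` for some `c_k > 0`. -/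
theorem DOPs_converge_uniformly_to_COPs (q d K : ℕ) (Ω : Set (Fin q → ℝ))
    (hbdd : Bornology.IsBounded Ω)
    (ω : (Fin q → ℝ) → ℝ) (hω : ∀ y ∈ Ω, 0 ≤ ω y)
    (hωint : IntegrableOn ω Ω)
    (x : (N : ℕ) → Fin N → (Fin q → ℝ)) (hx : ∀ N n, x N n ∈ Ω)
    (r : (N : ℕ) → Fin N → ℝ) (hr : ∀ N n, 0 ≤ r N n)
    -- the fixed ordered monomial basis of ℙ_d(ℝ^q)
    (e : Module.Basis (Fin K) ℝ (restrictTotalDegree (Fin q) ℝ d))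
    -- convergence of the discrete inner products to the continuous one
    (hconv : ∀ f ∈ restrictTotalDegree (Fin q) ℝ d,
      ∀ g ∈ restrictTotalDegree (Fin q) ℝ d,
      Tendsto (fun N => ∑ n, r N n * eval (x N n) f * eval (x N n) g)
        atTop (nhds (∫ y in Ω, eval y f * eval y g * ω y)))
    -- positive definiteness of the continuous inner product on ℙ_d(ℝ^q)
    (hposC : ∀ f ∈ restrictTotalDegree (Fin q) ℝ d, f ≠ 0 →
      0 < ∫ y in Ω, eval y f * eval y f * ω y)
    (N₂ : ℕ)
    -- positive definiteness of the discrete inner products for N ≥ N₂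
    (hposD : ∀ N ≥ N₂, ∀ f ∈ restrictTotalDegree (Fin q) ℝ d, f ≠ 0 →
      0 < ∑ n, r N n * eval (x N n) f * eval (x N n) f)
    (πN : ℕ → Fin K → MvPolynomial (Fin q) ℝ)
    (π : Fin K → MvPolynomial (Fin q) ℝ)
    (hπNmem : ∀ N k, πN N k ∈ restrictTotalDegree (Fin q) ℝ d)
    (hπmem : ∀ k, π k ∈ restrictTotalDegree (Fin q) ℝ d)
    -- πN N is the Gram--Schmidt orthonormalization of e w.r.t. [·,·]_N
    (hπNorth : ∀ N ≥ N₂, ∀ k l,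
      (∑ n, r N n * eval (x N n) (πN N k) * eval (x N n) (πN N l))
        = if k = l then 1 else 0)
    (hπNtri : ∀ N ≥ N₂, ∀ k, ∃ c : ℝ, 0 < c ∧
      πN N k - c • ((e k : MvPolynomial (Fin q) ℝ))
        ∈ Submodule.span ℝ ((fun l => ((e l : MvPolynomial (Fin q) ℝ)))
            '' {l | l < k}))
    -- π is the Gram--Schmidt orthonormalization of e w.r.t. ⟨·,·⟩
    (hπorth : ∀ k l, (∫ y in Ω, eval y (π k) * eval y (π l) * ω y)
        = if k = l then 1 else 0)
    (hπtri : ∀ k, ∃ c : ℝ, 0 < c ∧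
      π k - c • ((e k : MvPolynomial (Fin q) ℝ))
        ∈ Submodule.span ℝ ((fun l => ((e l : MvPolynomial (Fin q) ℝ)))
            '' {l | l < k})) :
    ∀ k, TendstoUniformlyOn (fun N y => eval y (πN N k))
      (fun y => eval y (π k)) atTop Ω := by
  classical
  let pN : ℕ → Fin K → restrictTotalDegree (Fin q) ℝ d := fun N k => ⟨πN N k, hπNmem N k⟩
  let p : Fin K → restrictTotalDegree (Fin q) ℝ d := fun k => ⟨π k, hπmem k⟩
  let GN : ℕ → Matrix (Fin K) (Fin K) ℝ := fun N => Matrix.of fun i j =>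
    ∑ n, r N n * eval (x N n) ((e i : MvPolynomial (Fin q) ℝ))
      * eval (x N n) ((e j : MvPolynomial (Fin q) ℝ))
  let G : Matrix (Fin K) (Fin K) ℝ := Matrix.of fun i j =>
    ∫ y in Ω, eval y ((e i : MvPolynomial (Fin q) ℝ))
      * eval y ((e j : MvPolynomial (Fin q) ℝ)) * ω y
  have hG : ∀ i j, Tendsto (fun N => GN N i j) atTop (nhds (G i j)) :=
    fun i j => hconv _ (e i).2 _ (e j).2
  -- evaluation through coordinates
  have heval : ∀ (f : restrictTotalDegree (Fin q) ℝ d) (y : Fin q → ℝ),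
      eval y (f : MvPolynomial (Fin q) ℝ)
        = ∑ i, e.repr f i * eval y ((e i : MvPolynomial (Fin q) ℝ)) := by
    intro f y
    conv_lhs => rw [← e.sum_repr f]
    rw [AddSubmonoidClass.coe_finset_sum, map_sum]
    exact Finset.sum_congr rfl fun i _ => by
      rw [SetLike.val_smul, smul_eval]
  -- discrete inner product through coordinates
  have hdisc : ∀ (N : ℕ) (f g : restrictTotalDegree (Fin q) ℝ d),
      (∑ n, r N n * eval (x N n) (f : MvPolynomial (Fin q) ℝ)
        * eval (x N n) (g : MvPolynomial (Fin q) ℝ))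
        = dotProduct (fun i => e.repr f i) ((GN N).mulVec (fun i => e.repr g i)) := by
    intro N f g
    have h := GSAux.sum_eval_expand (r N)
      (fun m i => eval (x N m) ((e i : MvPolynomial (Fin q) ℝ)))
      (fun i => e.repr f i) (fun i => e.repr g i)
    simp only [← heval] at h
    exact h
  -- translate triangularity
  have htrans : ∀ (f : MvPolynomial (Fin q) ℝ) (hf : f ∈ restrictTotalDegree (Fin q) ℝ d)
      (c : ℝ) (k : Fin K),
      f - c • ((e k : MvPolynomial (Fin q) ℝ)) ∈ Submodule.span ℝ
        ((fun l => ((e l : MvPolynomial (Fin q) ℝ))) '' {l | l < k}) →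
      e.repr ⟨f, hf⟩ k = c ∧ ∀ i, k < i → e.repr ⟨f, hf⟩ i = 0 := by
    intro f hf c k hmem
    have himg : ((fun l => ((e l : MvPolynomial (Fin q) ℝ))) '' {l | l < k})
        = (restrictTotalDegree (Fin q) ℝ d).subtype '' (e '' {l | l < k}) := by
      rw [Set.image_image]
      rfl
    rw [himg, ← Submodule.map_span] at hmem
    obtain ⟨z, hz, hzeq⟩ := Submodule.mem_map.1 hmem
    have hzz : z = ⟨f, hf⟩ - c • e k := by
      apply Subtype.ext
      have hcoe : ((⟨f, hf⟩ - c • e k : restrictTotalDegree (Fin q) ℝ d) : MvPolynomial (Fin q) ℝ)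
          = f - c • ((e k : MvPolynomial (Fin q) ℝ)) := by simp
      rw [hcoe]
      exact hzeq
    rw [hzz] at hz
    have hsupp : ((e.repr ((⟨f, hf⟩ : restrictTotalDegree (Fin q) ℝ d) - c • e k)).support : Set (Fin K)) ⊆ {l | l < k} :=
      e.mem_span_image.1 hz
    have hrepr : ∀ i : Fin K, e.repr (⟨f, hf⟩ : restrictTotalDegree (Fin q) ℝ d) i
        = e.repr ((⟨f, hf⟩ : restrictTotalDegree (Fin q) ℝ d) - c • e k) i + c * (Finsupp.single k (1:ℝ)) i := by
      intro i
      rw [map_sub, _root_.map_smul, e.repr_self]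
      simp only [Finsupp.sub_apply, Finsupp.smul_single, smul_eq_mul, mul_one,
        Finsupp.single_apply]
      split_ifs <;> ring
    constructor
    · have h0 : e.repr ((⟨f, hf⟩ : restrictTotalDegree (Fin q) ℝ d) - c • e k) k = 0 := by
        by_contra hne
        exact absurd (hsupp (Finsupp.mem_support_iff.2 hne)) (lt_irrefl k)
      rw [hrepr k, h0, Finsupp.single_eq_same]
      ring
    · intro i hi
      have h0 : e.repr ((⟨f, hf⟩ : restrictTotalDegree (Fin q) ℝ d) - c • e k) i = 0 := by
        by_contra hne
        exact absurd (hsupp (Finsupp.mem_support_iff.2 hne)) (not_lt_of_gt hi)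
      rw [hrepr i, h0, Finsupp.single_eq_of_ne (ne_of_gt hi)]
      ring
  -- continuous orthonormality in coordinates
  have horthA : ∀ k l,
      dotProduct (fun i => e.repr (p k) i) (G.mulVec (fun i => e.repr (p l) i))
        = if k = l then 1 else 0 := by
    intro k l
    have h1 : Tendsto (fun N =>
        dotProduct (fun i => e.repr (p k) i) ((GN N).mulVec (fun i => e.repr (p l) i))) atTop
        (nhds (dotProduct (fun i => e.repr (p k) i) (G.mulVec (fun i => e.repr (p l) i)))) :=
      GSAux.dot_tendsto hG (fun _ => tendsto_const_nhds) (fun _ => tendsto_const_nhds)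
    have h2 : Tendsto (fun N =>
        dotProduct (fun i => e.repr (p k) i) ((GN N).mulVec (fun i => e.repr (p l) i))) atTop
        (nhds (if k = l then 1 else 0)) := by
      have h3 := hconv (π k) (hπmem k) (π l) (hπmem l)
      rw [hπorth k l] at h3
      exact h3.congr fun N => hdisc N (p k) (p l)
    exact tendsto_nhds_unique h1 h2
  -- coordinate convergence via Gram--Schmidt stability
  have hcoord : ∀ k i, Tendsto (fun N => e.repr (pN N k) i) atTop
      (nhds (e.repr (p k) i)) := by
    refine GSAux.gs_conv (aN := fun N k i => e.repr (pN N k) i)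
      (a := fun k i => e.repr (p k) i) hG N₂ ?_ ?_ ?_ horthA ?_ ?_
    · intro N hN k l
      exact (hdisc N (pN N k) (pN N l)).symm.trans (hπNorth N hN k l)
    · intro N hN k i hki
      obtain ⟨c, hc, hmem⟩ := hπNtri N hN k
      exact (htrans (πN N k) (hπNmem N k) c k hmem).2 i hki
    · intro N hN k
      obtain ⟨c, hc, hmem⟩ := hπNtri N hN k
      have := (htrans (πN N k) (hπNmem N k) c k hmem).1
      exact lt_of_lt_of_eq hc this.symm
    · intro k i hki
      obtain ⟨c, hc, hmem⟩ := hπtri k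
      exact (htrans (π k) (hπmem k) c k hmem).2 i hki
    · intro k
      obtain ⟨c, hc, hmem⟩ := hπtri k
      have := (htrans (π k) (hπmem k) c k hmem).1
      exact lt_of_lt_of_eq hc this.symm
  -- uniform convergence from coordinate convergence
  intro k
  have hb : ∀ i : Fin K, ∃ C : ℝ, ∀ y ∈ Ω,
      |eval y ((e i : MvPolynomial (Fin q) ℝ))| ≤ C := by
    intro i
    obtain ⟨C, hC⟩ := hbdd.isCompact_closure.exists_bound_of_continuousOn
      (MvPolynomial.continuous_eval ((e i : MvPolynomial (Fin q) ℝ))).continuousOn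
    exact ⟨C, fun y hy => by
      simpa [Real.norm_eq_abs] using hC y (subset_closure hy)⟩
  choose C hC using hb
  set Cb : ℝ := (∑ i, |C i|) + 1 with hCb
  have hCb0 : 0 < Cb := by positivity
  have hCbound : ∀ (i : Fin K), ∀ y ∈ Ω,
      |eval y ((e i : MvPolynomial (Fin q) ℝ))| ≤ Cb := by
    intro i y hy
    calc |eval y ((e i : MvPolynomial (Fin q) ℝ))| ≤ C i := hC i y hy
      _ ≤ |C i| := le_abs_self _
      _ ≤ ∑ j, |C j| :=
        Finset.single_le_sum (f := fun j => |C j|) (fun j _ => abs_nonneg _)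
          (Finset.mem_univ i)
      _ ≤ Cb := by rw [hCb]; linarith
  rw [Metric.tendstoUniformlyOn_iff]
  intro ε hε
  set δ : ℝ := ε / (K * Cb + 1) with hδ
  have hδ0 : 0 < δ := by positivity
  have hev : ∀ᶠ N in atTop, ∀ i, |e.repr (pN N k) i - e.repr (p k) i| < δ := by
    rw [eventually_all]
    intro i
    have h2 := Metric.tendsto_nhds.mp (hcoord k i) δ hδ0
    refine h2.mono fun N hN => ?_
    rwa [Real.dist_eq] at hN
  refine hev.mono fun N hN y hy => ?_
  have hevalN : eval y (πN N k)
      = ∑ i, e.repr (pN N k) i * eval y ((e i : MvPolynomial (Fin q) ℝ)) :=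
    heval (pN N k) y
  have hevalP : eval y (π k)
      = ∑ i, e.repr (p k) i * eval y ((e i : MvPolynomial (Fin q) ℝ)) :=
    heval (p k) y
  rw [Real.dist_eq, hevalP, hevalN, ← Finset.sum_sub_distrib]
  have hterm : ∀ i : Fin K,
      |e.repr (p k) i * eval y ((e i : MvPolynomial (Fin q) ℝ))
        - e.repr (pN N k) i * eval y ((e i : MvPolynomial (Fin q) ℝ))| ≤ δ * Cb := by
    intro i
    rw [← sub_mul, abs_mul]
    have h1 : |e.repr (p k) i - e.repr (pN N k) i| ≤ δ := by
      rw [abs_sub_comm]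
      exact le_of_lt (hN i)
    exact mul_le_mul h1 (hCbound i y hy) (abs_nonneg _) (le_of_lt hδ0)
  calc |∑ i, (e.repr (p k) i * eval y ((e i : MvPolynomial (Fin q) ℝ))
        - e.repr (pN N k) i * eval y ((e i : MvPolynomial (Fin q) ℝ)))|
      ≤ ∑ i, |e.repr (p k) i * eval y ((e i : MvPolynomial (Fin q) ℝ))
        - e.repr (pN N k) i * eval y ((e i : MvPolynomial (Fin q) ℝ))| :=
        Finset.abs_sum_le_sum_abs _ _
    _ ≤ ∑ _i : Fin K, δ * Cb := Finset.sum_le_sum fun i _ => hterm i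
    _ = K * (δ * Cb) := by
        rw [Finset.sum_const, Finset.card_univ, Fintype.card_fin, nsmul_eq_mul]
    _ < ε := by
        have hδe : δ * (K * Cb + 1) = ε := div_mul_cancel₀ _ (by positivity)
        nlinarith [hδ0, mul_nonneg (Nat.cast_nonneg (α := ℝ) K) (le_of_lt hCb0)]
end

section
/- Let Ω ⊂ ℝ^q be bounded with |Ω| > 0 and ω a nonnegative integrable weight. Fix d ∈ ℕ₀ and let N₀ be such that X_{N₀} = {x_n}_{n=1}^{N₀} ⊂ Ω is ℙ_d(ℝ^q)-unisolvent with ω(x_n) > 0 for n ≤ N₀. For N > N₀ set X_N = X_{N₀} ∪ {x_n}_{n=N₀+1}^N and r_n = ω(x_n)|Ω|/N, and assume (|Ω|/N) Σ_{n=1}^N u(x_n) v(x_n) ω(x_n) → ∫_Ω u v ω dx for all u, v ∈ ℙ_d(ℝ^q). Then there exists N₁ ≥ N₀ such that for all N ≥ N₁, all weights w_n^{LS} = r_n Σ_{k=1}^K π_k(x_n; r) I[π_k(·; r)] of the least-squares cubature formula with degree of exactness d are nonnegative. -/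
open MvPolynomial MeasureTheory Filter


theorem mvpoly_zero_null : ∀ {q : ℕ} (f : MvPolynomial (Fin q) ℝ), f ≠ 0 →
    volume {y : Fin q → ℝ | eval y f = 0} = 0 := by
  intro q
  induction q with
  | zero =>
    intro f hf
    obtain ⟨c, rfl⟩ := MvPolynomial.C_surjective (Fin 0) f
    have hc : c ≠ 0 := fun h => hf (by simp [h])
    have : {y : Fin 0 → ℝ | eval y (C c) = 0} = ∅ := by
      ext y; simp [hc]
    rw [this]; exact measure_empty
  | succ q ih =>
    intro f hf
    set F := finSuccEquiv ℝ q f with hFdef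
    have hF : F ≠ 0 := by
      intro h
      exact hf (by simpa using (finSuccEquiv ℝ q).injective (h.trans (map_zero _).symm))
    have hi₀ : F.coeff F.natDegree ≠ 0 := by
      rw [← Polynomial.leadingCoeff]
      exact Polynomial.leadingCoeff_ne_zero.mpr hF
    set i₀ := F.natDegree
    have hcont : Continuous fun y : Fin (q + 1) → ℝ => eval y f :=
      MvPolynomial.continuous_eval f
    have hSm : MeasurableSet {y : Fin (q + 1) → ℝ | eval y f = 0} :=
      hcont.measurable (measurableSet_singleton 0)
    set e := MeasurableEquiv.piFinSuccAbove (fun _ : Fin (q + 1) => ℝ) 0 with hedef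
    have hmp := MeasureTheory.volume_preserving_piFinSuccAbove (fun _ : Fin (q + 1) => ℝ) 0
    set T : Set (ℝ × (Fin q → ℝ)) := {p | eval (Fin.cons p.1 p.2) f = 0} with hTdef
    have hesymm : ∀ p : ℝ × (Fin q → ℝ), e.symm p = Fin.cons p.1 p.2 := by
      intro p
      simp [hedef, MeasurableEquiv.piFinSuccAbove, Fin.insertNthEquiv, Fin.insertNth_zero]
    have hTm : MeasurableSet T := by
      have : T = e.symm ⁻¹' {y | eval y f = 0} := by
        ext p; simp [hTdef, hesymm]
      rw [this]; exact e.symm.measurable hSm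
    have hS_eq : {y : Fin (q + 1) → ℝ | eval y f = 0} = e ⁻¹' T := by
      ext y
      have hy : Fin.cons (e y).1 (e y).2 = y := by
        ext i
        refine Fin.cases ?_ ?_ i
        · simp [hedef]
        · intro j; simp [hedef, Fin.succAbove, Fin.tail]
      simp only [Set.mem_preimage, hTdef, Set.mem_setOf_eq, hy]
    rw [hS_eq, hmp.measure_preimage hTm.nullMeasurableSet]
    have hswap : (volume : Measure (ℝ × (Fin q → ℝ))) T
        = (volume : Measure ((Fin q → ℝ) × ℝ)) (Prod.swap ⁻¹' T) := by
      have h1 : (volume : Measure (ℝ × (Fin q → ℝ)))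
          = Measure.map Prod.swap (volume : Measure ((Fin q → ℝ) × ℝ)) :=
        (Measure.prod_swap).symm
      rw [h1, Measure.map_apply measurable_swap hTm]
    rw [hswap]
    have hT'm : MeasurableSet (Prod.swap ⁻¹' T : Set ((Fin q → ℝ) × ℝ)) :=
      hTm.preimage measurable_swap
    rw [show (volume : Measure ((Fin q → ℝ) × ℝ))
        = (volume : Measure (Fin q → ℝ)).prod (volume : Measure ℝ) from rfl]
    rw [MeasureTheory.Measure.measure_prod_null hT'm]
    have hbad : ∀ᵐ z : Fin q → ℝ, eval z (F.coeff i₀) ≠ 0 := by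
      rw [ae_iff]
      simp only [not_not]
      exact ih _ hi₀
    filter_upwards [hbad] with z hz
    have hpz : Polynomial.map (eval z) F ≠ 0 := by
      intro h
      apply hz
      have := congrArg (fun p => Polynomial.coeff p i₀) h
      simpa [Polynomial.coeff_map] using this
    have hset : Prod.mk z ⁻¹' (Prod.swap ⁻¹' T)
        = {a : ℝ | Polynomial.eval a (Polynomial.map (eval z) F) = 0} := by
      ext a
      simp only [Set.mem_preimage, Set.mem_setOf_eq, hTdef, Prod.swap]
      rw [MvPolynomial.eval_eq_eval_mv_eval']
    simp only [hset, Pi.zero_apply]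
    exact Set.Finite.measure_zero (Polynomial.finite_setOf_isRoot hpz) volume


-- sum expansion lemmas
theorem sum_expand_left {K N : ℕ} (r w : Fin N → ℝ) (A : Fin N → Fin K → ℝ) (a : Fin K → ℝ) :
    ∑ n, r n * (∑ j, a j * A n j) * w n = ∑ j, a j * ∑ n, r n * A n j * w n := by
  calc ∑ n, r n * (∑ j, a j * A n j) * w n
      = ∑ n, ∑ j, a j * (r n * A n j * w n) := by
        refine Finset.sum_congr rfl fun n _ => ?_
        rw [Finset.mul_sum, Finset.sum_mul]
        exact Finset.sum_congr rfl fun j _ => by ring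
    _ = ∑ j, ∑ n, a j * (r n * A n j * w n) := Finset.sum_comm
    _ = ∑ j, a j * ∑ n, r n * A n j * w n := by
        refine Finset.sum_congr rfl fun j _ => ?_
        rw [Finset.mul_sum]

theorem sum_expand_right {K N : ℕ} (r w : Fin N → ℝ) (A : Fin N → Fin K → ℝ) (a : Fin K → ℝ) :
    ∑ n, r n * w n * (∑ j, a j * A n j) = ∑ j, a j * ∑ n, r n * w n * A n j := by
  calc ∑ n, r n * w n * (∑ j, a j * A n j)
      = ∑ n, ∑ j, a j * (r n * w n * A n j) := by
        refine Finset.sum_congr rfl fun n _ => ?_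
        rw [Finset.mul_sum]
        exact Finset.sum_congr rfl fun j _ => by ring
    _ = ∑ j, ∑ n, a j * (r n * w n * A n j) := Finset.sum_comm
    _ = ∑ j, a j * ∑ n, r n * w n * A n j := by
        refine Finset.sum_congr rfl fun j _ => ?_
        rw [Finset.mul_sum]

theorem sum_expand2 {K N : ℕ} (r : Fin N → ℝ) (A B : Fin N → Fin K → ℝ) (a b : Fin K → ℝ) :
    (∑ n, r n * (∑ i, a i * A n i) * (∑ j, b j * B n j))
      = ∑ i, ∑ j, a i * b j * ∑ n, r n * A n i * B n j := by
  calc ∑ n, r n * (∑ i, a i * A n i) * (∑ j, b j * B n j)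
      = ∑ n, ∑ i, ∑ j, a i * b j * (r n * A n i * B n j) := by
        refine Finset.sum_congr rfl fun n _ => ?_
        rw [mul_assoc, Finset.sum_mul_sum, Finset.mul_sum]
        refine Finset.sum_congr rfl fun i _ => ?_
        rw [Finset.mul_sum]
        exact Finset.sum_congr rfl fun j _ => by ring
    _ = ∑ i, ∑ n, ∑ j, a i * b j * (r n * A n i * B n j) := Finset.sum_comm
    _ = ∑ i, ∑ j, ∑ n, a i * b j * (r n * A n i * B n j) :=
        Finset.sum_congr rfl fun i _ => Finset.sum_comm
    _ = ∑ i, ∑ j, a i * b j * ∑ n, r n * A n i * B n j := by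
        refine Finset.sum_congr rfl fun i _ => Finset.sum_congr rfl fun j _ => ?_
        rw [Finset.mul_sum]

theorem eval_sum_smul {q K : ℕ} (y : Fin q → ℝ) (a : Fin K → ℝ)
    (P : Fin K → MvPolynomial (Fin q) ℝ) :
    eval y (∑ j, a j • P j) = ∑ j, a j * eval y (P j) := by
  rw [map_sum]
  refine Finset.sum_congr rfl fun j _ => ?_
  rw [smul_eq_C_mul, map_mul, eval_C]

theorem cont_bdd_on_bounded {q : ℕ} {Ω : Set (Fin q → ℝ)} (hbdd : Bornology.IsBounded Ω)
    (F : (Fin q → ℝ) → ℝ) (hF : Continuous F) : ∃ C, ∀ y ∈ Ω, |F y| ≤ C := by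
  obtain ⟨C, hC⟩ := hbdd.isCompact_closure.exists_bound_of_continuousOn hF.continuousOn
  exact ⟨C, fun y hy => by simpa [Real.norm_eq_abs] using hC y (subset_closure hy)⟩

theorem integ_cont_mul {q : ℕ} {Ω : Set (Fin q → ℝ)} (hΩ : MeasurableSet Ω)
    (hbdd : Bornology.IsBounded Ω) {ω : (Fin q → ℝ) → ℝ} (hωint : IntegrableOn ω Ω)
    (F : (Fin q → ℝ) → ℝ) (hF : Continuous F) :
    IntegrableOn (fun y => F y * ω y) Ω := by
  obtain ⟨C, hC⟩ := cont_bdd_on_bounded hbdd F hF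
  exact Integrable.bdd_mul hωint hF.aestronglyMeasurable.restrict
    (ae_restrict_of_forall_mem hΩ fun y hy => by
      simpa [Real.norm_eq_abs] using hC y hy)

theorem quad_coercive {K : ℕ} (hK : 0 < K) (G : Fin K → Fin K → ℝ)
    (hpd : ∀ a : Fin K → ℝ, a ≠ 0 → 0 < ∑ i, ∑ j, a i * a j * G i j) :
    ∃ c₀ > 0, ∀ a : Fin K → ℝ, c₀ * ∑ i, (a i) ^ 2 ≤ ∑ i, ∑ j, a i * a j * G i j := by
  classical
  set φ : (Fin K → ℝ) → ℝ := fun a => ∑ i, ∑ j, a i * a j * G i j with hφ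
  have hφcont : Continuous φ := by
    apply continuous_finset_sum
    intro i _
    apply continuous_finset_sum
    intro j _
    exact ((continuous_apply i).mul (continuous_apply j)).mul continuous_const
  set Sph : Set (Fin K → ℝ) := {a | ∑ i, (a i) ^ 2 = 1} with hSph
  have hScont : Continuous fun a : Fin K → ℝ => ∑ i, (a i) ^ 2 := by
    apply continuous_finset_sum
    intro i _
    exact (continuous_apply i).pow 2
  have hclosed : IsClosed Sph := isClosed_eq hScont continuous_const
  have hsub : Sph ⊆ Set.pi Set.univ fun _ => Set.Icc (-1 : ℝ) 1 := by
    intro a ha i _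
    have h1 : (a i) ^ 2 ≤ 1 := by
      rw [← ha]
      exact Finset.single_le_sum (fun j _ => sq_nonneg (a j)) (Finset.mem_univ i)
    have : |a i| ≤ 1 := by
      rw [← Real.sqrt_sq_eq_abs]
      calc Real.sqrt ((a i) ^ 2) ≤ Real.sqrt 1 := Real.sqrt_le_sqrt h1
        _ = 1 := Real.sqrt_one
    exact abs_le.mp this
  have hcomp : IsCompact Sph :=
    (isCompact_univ_pi fun _ => isCompact_Icc).of_isClosed_subset hclosed hsub
  have hne : Sph.Nonempty := by
    refine ⟨fun i => if i = ⟨0, hK⟩ then 1 else 0, ?_⟩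
    have : ∀ i : Fin K, ((if i = ⟨0, hK⟩ then (1 : ℝ) else 0)) ^ 2
        = if i = ⟨0, hK⟩ then 1 else 0 := by
      intro i; split <;> norm_num
    simp only [hSph, Set.mem_setOf_eq, this]
    simp
  obtain ⟨a₀, ha₀S, hmin⟩ := hcomp.exists_isMinOn hne hφcont.continuousOn
  have ha₀ne : a₀ ≠ 0 := by
    intro h
    have := ha₀S
    rw [h] at this
    simp [hSph] at this
  refine ⟨φ a₀, hpd a₀ ha₀ne, ?_⟩
  intro a
  by_cases ha : a = 0
  · simp [ha, hφ]
  · have hex : ∃ i, a i ≠ 0 := by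
      by_contra h
      push_neg at h
      exact ha (funext h)
    obtain ⟨i₁, hi₁⟩ := hex
    have hs : 0 < ∑ i, (a i) ^ 2 :=
      Finset.sum_pos' (fun i _ => sq_nonneg _) ⟨i₁, Finset.mem_univ i₁, by positivity⟩
    set s := ∑ i, (a i) ^ 2 with hsdef
    have hsqrt : Real.sqrt s * Real.sqrt s = s := Real.mul_self_sqrt hs.le
    set a' : Fin K → ℝ := fun i => a i / Real.sqrt s with ha'
    have hsne : Real.sqrt s ≠ 0 := by positivity
    have ha'S : a' ∈ Sph := by
      simp only [hSph, Set.mem_setOf_eq, ha', div_pow, ← Finset.sum_div]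
      rw [Real.sq_sqrt hs.le, div_self hs.ne']
    have hφa' : φ a' = φ a / s := by
      simp only [hφ, ha']
      rw [Finset.sum_div]
      refine Finset.sum_congr rfl fun i _ => ?_
      rw [Finset.sum_div]
      refine Finset.sum_congr rfl fun j _ => ?_
      calc a i / Real.sqrt s * (a j / Real.sqrt s) * G i j
          = a i * a j * G i j / (Real.sqrt s * Real.sqrt s) := by ring
        _ = a i * a j * G i j / s := by rw [hsqrt]
    have := isMinOn_iff.mp hmin a' ha'S
    rw [hφa', le_div_iff₀ hs] at this
    linarith [this]

/-- Theorem 1 (main result): for a fixed degree of exactness `d` and a growing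
`ℙ_d(ℝ^q)`-unisolvent family of data points whose discrete inner products
converge to the continuous one, the least squares cubature weights
`w_n^{LS} = r_n ∑_k π_k(x_n; r) I[π_k(·; r)]` are all nonnegative for `N`
sufficiently large. -/
theorem LS_weights_eventually_nonneg (q d K N₀ : ℕ)
    (hK : K = (d + q).choose q)
    (Ω : Set (Fin q → ℝ)) (hΩ : MeasurableSet Ω)
    (hbdd : Bornology.IsBounded Ω)
    (hvol : 0 < (MeasureTheory.volume Ω).toReal)
    (ω : (Fin q → ℝ) → ℝ) (hω : ∀ y ∈ Ω, 0 ≤ ω y) (hωint : IntegrableOn ω Ω)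
    (x : ℕ → (Fin q → ℝ)) (hx : ∀ n, x n ∈ Ω)
    -- X_{N₀} is ℙ_d(ℝ^q)-unisolvent and ω is positive there
    (huni : ∀ f ∈ restrictTotalDegree (Fin q) ℝ d,
      (∀ n < N₀, eval (x n) f = 0) → f = 0)
    (hωpos : ∀ n < N₀, 0 < ω (x n))
    -- convergence of the discrete inner products (assumption (13) of Thm 1)
    (hconv : ∀ f ∈ restrictTotalDegree (Fin q) ℝ d,
      ∀ g ∈ restrictTotalDegree (Fin q) ℝ d,
      Tendsto (fun N : ℕ => ∑ n : Fin N,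
          (ω (x n) * (MeasureTheory.volume Ω).toReal / N)
            * eval (x n) f * eval (x n) g)
        atTop (nhds (∫ y in Ω, eval y f * eval y g * ω y)))
    -- discrete orthonormal polynomial bases of ℙ_d(ℝ^q)
    (πN : ℕ → Fin K → MvPolynomial (Fin q) ℝ)
    (hπmem : ∀ N k, πN N k ∈ restrictTotalDegree (Fin q) ℝ d)
    (hπspan : ∀ N ≥ N₀, ∀ f ∈ restrictTotalDegree (Fin q) ℝ d,
      f ∈ Submodule.span ℝ (Set.range (πN N)))
    (hπorth : ∀ N ≥ N₀, ∀ k l,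
      (∑ n : Fin N, (ω (x n) * (MeasureTheory.volume Ω).toReal / N)
          * eval (x n) (πN N k) * eval (x n) (πN N l))
        = if k = l then 1 else 0) :
    ∃ N₁ ≥ N₀, ∀ N ≥ N₁, ∀ n : Fin N,
      0 ≤ (ω (x n) * (MeasureTheory.volume Ω).toReal / N)
            * ∑ k, eval (x n) (πN N k) * ∫ y in Ω, eval y (πN N k) * ω y := by
  classical
  have hωae : (0 : (Fin q → ℝ) → ℝ) ≤ᵐ[volume.restrict Ω] ω := by
    filter_upwards [ae_restrict_mem hΩ] with y hy using hω y hy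
  have hr : ∀ (N : ℕ) (n : Fin N), 0 ≤ ω (x n) * (volume Ω).toReal / N := fun N n =>
    div_nonneg (mul_nonneg (hω _ (hx n)) ENNReal.toReal_nonneg) (Nat.cast_nonneg N)
  rcases eq_or_lt_of_le (integral_nonneg_of_ae hωae) with hizero | hipos
  · -- degenerate case : ω vanishes a.e. on Ω, all integrals are zero
    have hω0 : ω =ᵐ[volume.restrict Ω] 0 :=
      (integral_eq_zero_iff_of_nonneg_ae hωae hωint).mp hizero.symm
    refine ⟨N₀, le_refl _, fun N _ n => ?_⟩
    have hIk : ∀ k : Fin K, (∫ y in Ω, eval y (πN N k) * ω y) = 0 := by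
      intro k
      have h0 : (fun y => eval y (πN N k) * ω y) =ᵐ[volume.restrict Ω] 0 := by
        filter_upwards [hω0] with y hy
        simp only [Pi.zero_apply] at hy ⊢
        simp [hy]
      rw [integral_congr_ae h0]
      simp
    simp [hIk]
  · -- main case
    have hKpos : 0 < K := by
      rw [hK]; exact Nat.choose_pos (Nat.le_add_left q d)
    have h1V : (1 : MvPolynomial (Fin q) ℝ) ∈ restrictTotalDegree (Fin q) ℝ d := by
      rw [mem_restrictTotalDegree, totalDegree_one]
      exact Nat.zero_le d
    -- linear independence of the reference basis πN N₀
    have hlin : ∀ a : Fin K → ℝ, (∑ j, a j • πN N₀ j) = 0 → a = 0 := by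
      intro a h0
      funext l
      have h1 : (∑ n : Fin N₀, (ω (x n) * (volume Ω).toReal / N₀)
          * eval (x n) (∑ j, a j • πN N₀ j) * eval (x n) (πN N₀ l)) = a l := by
        calc (∑ n : Fin N₀, (ω (x n) * (volume Ω).toReal / N₀)
              * eval (x n) (∑ j, a j • πN N₀ j) * eval (x n) (πN N₀ l))
            = ∑ n : Fin N₀, (ω (x n) * (volume Ω).toReal / N₀)
              * (∑ j, a j * eval (x n) (πN N₀ j)) * eval (x n) (πN N₀ l) := by
              refine Finset.sum_congr rfl fun n _ => ?_
              rw [eval_sum_smul]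
          _ = ∑ j, a j * ∑ n : Fin N₀, (ω (x n) * (volume Ω).toReal / N₀)
              * eval (x n) (πN N₀ j) * eval (x n) (πN N₀ l) :=
              sum_expand_left _ _ _ _
          _ = ∑ j, a j * if j = l then 1 else 0 := by
              refine Finset.sum_congr rfl fun j _ => ?_
              rw [hπorth N₀ le_rfl j l]
          _ = a l := by simp
      rw [h0] at h1
      simp only [map_zero, mul_zero, zero_mul, Finset.sum_const_zero] at h1
      simp only [Pi.zero_apply]
      exact h1.symm
    have hrepN : ∀ N, N₀ ≤ N → ∀ k : Fin K,
        ∃ a : Fin K → ℝ, (∑ j, a j • πN N₀ j) = πN N k :=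
      fun N _ k => (Submodule.mem_span_range_iff_exists_fun ℝ).mp (hπspan N₀ le_rfl _ (hπmem N k))
    have honeN : ∀ N, N₀ ≤ N → ∃ u : Fin K → ℝ, (∑ k, u k • πN N k) = 1 :=
      fun N hN => (Submodule.mem_span_range_iff_exists_fun ℝ).mp (hπspan N hN 1 h1V)
    have hIntP : ∀ f g : MvPolynomial (Fin q) ℝ,
        IntegrableOn (fun y => eval y f * eval y g * ω y) Ω := by
      intro f g
      exact integ_cont_mul hΩ hbdd hωint (fun y => eval y f * eval y g)
        ((MvPolynomial.continuous_eval f).mul (MvPolynomial.continuous_eval g))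
    -- continuous bilinear expansion
    have hGexp : ∀ a b : Fin K → ℝ,
        (∫ y in Ω, eval y (∑ j, a j • πN N₀ j) * eval y (∑ j, b j • πN N₀ j) * ω y)
          = ∑ i, ∑ j, a i * b j
            * ∫ y in Ω, eval y (πN N₀ i) * eval y (πN N₀ j) * ω y := by
      intro a b
      have hpt : ∀ y : Fin q → ℝ,
          eval y (∑ j, a j • πN N₀ j) * eval y (∑ j, b j • πN N₀ j) * ω y
          = ∑ i, ∑ j, a i * b j * (eval y (πN N₀ i) * eval y (πN N₀ j) * ω y) := by
        intro y
        rw [eval_sum_smul, eval_sum_smul, Finset.sum_mul_sum, Finset.sum_mul]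
        refine Finset.sum_congr rfl fun i _ => ?_
        rw [Finset.sum_mul]
        exact Finset.sum_congr rfl fun j _ => by ring
      rw [integral_congr_ae (ae_of_all _ hpt),
        integral_finset_sum _ (fun i _ => integrable_finset_sum _
          (fun j _ => ((hIntP (πN N₀ i) (πN N₀ j)).const_mul _)))]
      refine Finset.sum_congr rfl fun i _ => ?_
      rw [integral_finset_sum _ (fun j _ => ((hIntP (πN N₀ i) (πN N₀ j)).const_mul _))]
      exact Finset.sum_congr rfl fun j _ => integral_const_mul _ _
    -- discrete bilinear expansion
    have hgexp : ∀ (N : ℕ) (a b : Fin K → ℝ),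
        (∑ n : Fin N, (ω (x n) * (volume Ω).toReal / N)
            * eval (x n) (∑ j, a j • πN N₀ j) * eval (x n) (∑ j, b j • πN N₀ j))
          = ∑ i, ∑ j, a i * b j * ∑ n : Fin N, (ω (x n) * (volume Ω).toReal / N)
            * eval (x n) (πN N₀ i) * eval (x n) (πN N₀ j) := by
      intro N a b
      rw [show (∑ n : Fin N, (ω (x n) * (volume Ω).toReal / N)
            * eval (x n) (∑ j, a j • πN N₀ j) * eval (x n) (∑ j, b j • πN N₀ j))
          = ∑ n : Fin N, (ω (x n) * (volume Ω).toReal / N)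
            * (∑ i, a i * eval (x n) (πN N₀ i)) * (∑ j, b j * eval (x n) (πN N₀ j))
          from Finset.sum_congr rfl fun n _ => by rw [eval_sum_smul, eval_sum_smul]]
      exact sum_expand2 _ _ _ _ _
    -- positive definiteness of the continuous Gram matrix
    have hGpd : ∀ a : Fin K → ℝ, a ≠ 0 → 0 < ∑ i, ∑ j, a i * a j
        * ∫ y in Ω, eval y (πN N₀ i) * eval y (πN N₀ j) * ω y := by
      intro a ha
      rw [← hGexp a a]
      have hf0 : (∑ j, a j • πN N₀ j) ≠ 0 := fun h => ha (hlin a h)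
      have hnn : ∀ y ∈ Ω, 0 ≤ eval y (∑ j, a j • πN N₀ j)
          * eval y (∑ j, a j • πN N₀ j) * ω y := fun y hy =>
        mul_nonneg (mul_self_nonneg _) (hω y hy)
      rcases eq_or_lt_of_le (setIntegral_nonneg hΩ hnn) with heq | hlt
      · exfalso
        have hae0 : (fun y => eval y (∑ j, a j • πN N₀ j)
            * eval y (∑ j, a j • πN N₀ j) * ω y) =ᵐ[volume.restrict Ω] 0 :=
          (integral_eq_zero_iff_of_nonneg_ae
            (by filter_upwards [ae_restrict_mem hΩ] with y hy using hnn y hy)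
            (hIntP _ _)).mp heq.symm
        have hres0 : (volume.restrict Ω) {y | eval y (∑ j, a j • πN N₀ j) = 0} = 0 := by
          have h1 := mvpoly_zero_null _ hf0
          exact le_antisymm (le_trans (Measure.restrict_le_self _) h1.le) zero_le
        have hfne : ∀ᵐ y ∂(volume.restrict Ω), eval y (∑ j, a j • πN N₀ j) ≠ 0 := by
          rw [ae_iff]
          simpa [not_not] using hres0
        have hω0 : ω =ᵐ[volume.restrict Ω] 0 := by
          filter_upwards [hae0, hfne] with y h1 h2
          simp only [Pi.zero_apply] at h1 ⊢
          rcases mul_eq_zero.mp h1 with h | h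
          · exact absurd h (mul_ne_zero h2 h2)
          · exact h
        have hzero : ∫ y in Ω, ω y = 0 := by
          rw [integral_congr_ae hω0]
          simp
        exact absurd hzero (ne_of_gt hipos)
      · exact hlt
    obtain ⟨c₀, hc₀, hcoer⟩ := quad_coercive hKpos _ hGpd
    -- uniform bound for the reference basis on Ω
    obtain ⟨C, hC⟩ := cont_bdd_on_bounded hbdd
      (fun y => ∑ j, |eval y (πN N₀ j)|)
      (continuous_finset_sum _ fun j _ => (MvPolynomial.continuous_eval _).abs)
    set M := max C 1 with hMdef
    have hM1 : (1 : ℝ) ≤ M := le_max_right _ _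
    have hMpos : (0 : ℝ) < M := lt_of_lt_of_le one_pos hM1
    have hMb : ∀ (j : Fin K), ∀ y ∈ Ω, |eval y (πN N₀ j)| ≤ M := by
      intro j y hy
      calc |eval y (πN N₀ j)| ≤ ∑ j', |eval y (πN N₀ j')| :=
            Finset.single_le_sum (f := fun j' => |eval y (πN N₀ j')|)
              (fun j' _ => abs_nonneg _) (Finset.mem_univ j)
        _ ≤ C := le_trans (le_abs_self _) (hC y hy)
        _ ≤ M := le_max_left _ _
    have hKR : (0 : ℝ) < (K : ℝ) := Nat.cast_pos.mpr hKpos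
    set S₀ := 2 / c₀ with hS₀
    have hS₀pos : 0 < S₀ := by positivity
    set T := M * (K : ℝ) ^ 3 * S₀ with hT
    have hTpos : 0 < T := mul_pos (mul_pos hMpos (pow_pos hKR 3)) hS₀pos
    set εG := c₀ / (2 * ((K : ℝ) ^ 2 + 1)) with hεG
    have hεGpos : 0 < εG := by positivity
    set εb := 1 / (T + 1) with hεb
    have hεbpos : 0 < εb := by positivity
    -- eventual closeness of discrete data to continuous data
    have hEG : ∀ᶠ N : ℕ in atTop, ∀ i j : Fin K,
        |(∑ n : Fin N, (ω (x n) * (volume Ω).toReal / N)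
            * eval (x n) (πN N₀ i) * eval (x n) (πN N₀ j))
          - ∫ y in Ω, eval y (πN N₀ i) * eval y (πN N₀ j) * ω y| ≤ εG := by
      refine eventually_all.mpr fun i => eventually_all.mpr fun j => ?_
      obtain ⟨N', hN'⟩ := Metric.tendsto_atTop.mp
        (hconv _ (hπmem N₀ i) _ (hπmem N₀ j)) εG hεGpos
      refine eventually_atTop.mpr ⟨N', fun m hm => ?_⟩
      have h := hN' m hm
      rw [Real.dist_eq] at h
      exact h.le
    have hEb : ∀ᶠ N : ℕ in atTop, ∀ j : Fin K,
        |(∑ n : Fin N, (ω (x n) * (volume Ω).toReal / N)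
            * eval (x n) (πN N₀ j) * eval (x n) (1 : MvPolynomial (Fin q) ℝ))
          - ∫ y in Ω, eval y (πN N₀ j) * eval y (1 : MvPolynomial (Fin q) ℝ) * ω y| ≤ εb := by
      refine eventually_all.mpr fun j => ?_
      obtain ⟨N', hN'⟩ := Metric.tendsto_atTop.mp (hconv _ (hπmem N₀ j) 1 h1V) εb hεbpos
      refine eventually_atTop.mpr ⟨N', fun m hm => ?_⟩
      have h := hN' m hm
      rw [Real.dist_eq] at h
      exact h.le
    obtain ⟨N₁', hN₁'⟩ := eventually_atTop.mp (hEG.and hEb)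
    refine ⟨max N₁' N₀, le_max_right _ _, fun N hN n => ?_⟩
    have hNN₀ : N₀ ≤ N := le_trans (le_max_right _ _) hN
    obtain ⟨hG_N, hb_N⟩ := hN₁' N (le_trans (le_max_left _ _) hN)
    -- coercivity of the discrete Gram form at level N
    have hcoerN : ∀ v : Fin K → ℝ,
        (c₀ / 2) * (∑ i, (v i) ^ 2) ≤ ∑ i, ∑ j, v i * v j
          * ∑ n : Fin N, (ω (x n) * (volume Ω).toReal / N)
            * eval (x n) (πN N₀ i) * eval (x n) (πN N₀ j) := by
      intro v
      have hsnn : (0:ℝ) ≤ ∑ i, (v i) ^ 2 := Finset.sum_nonneg fun i _ => sq_nonneg _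
      have hvv : ∀ i j : Fin K, |v i * v j| ≤ ∑ i', (v i') ^ 2 := by
        intro i j
        have h1 : (v i) ^ 2 ≤ ∑ i', (v i') ^ 2 :=
          Finset.single_le_sum (fun i' _ => sq_nonneg (v i')) (Finset.mem_univ i)
        have h2 : (v j) ^ 2 ≤ ∑ i', (v i') ^ 2 :=
          Finset.single_le_sum (fun i' _ => sq_nonneg (v i')) (Finset.mem_univ j)
        have h3 : (v i * v j) ^ 2 ≤ (∑ i', (v i') ^ 2) * (∑ i', (v i') ^ 2) := by
          rw [mul_pow]
          exact mul_le_mul h1 h2 (sq_nonneg _) hsnn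
        calc |v i * v j| = Real.sqrt ((v i * v j) ^ 2) := (Real.sqrt_sq_eq_abs _).symm
          _ ≤ Real.sqrt ((∑ i', (v i') ^ 2) * (∑ i', (v i') ^ 2)) := Real.sqrt_le_sqrt h3
          _ = ∑ i', (v i') ^ 2 := Real.sqrt_mul_self hsnn
      have hdiff : |(∑ i, ∑ j, v i * v j
            * ∑ n : Fin N, (ω (x n) * (volume Ω).toReal / N)
              * eval (x n) (πN N₀ i) * eval (x n) (πN N₀ j))
          - ∑ i, ∑ j, v i * v j
            * ∫ y in Ω, eval y (πN N₀ i) * eval y (πN N₀ j) * ω y|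
          ≤ (c₀ / 2) * ∑ i', (v i') ^ 2 := by
        rw [← Finset.sum_sub_distrib]
        calc |∑ i, ((∑ j, v i * v j * ∑ n : Fin N, (ω (x n) * (volume Ω).toReal / N)
                * eval (x n) (πN N₀ i) * eval (x n) (πN N₀ j))
              - ∑ j, v i * v j * ∫ y in Ω, eval y (πN N₀ i) * eval y (πN N₀ j) * ω y)|
            ≤ ∑ i, |(∑ j, v i * v j * ∑ n : Fin N, (ω (x n) * (volume Ω).toReal / N)
                * eval (x n) (πN N₀ i) * eval (x n) (πN N₀ j))
              - ∑ j, v i * v j * ∫ y in Ω, eval y (πN N₀ i) * eval y (πN N₀ j) * ω y| :=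
              Finset.abs_sum_le_sum_abs _ _
          _ ≤ ∑ i : Fin K, ((∑ i', (v i') ^ 2) * εG) * K := by
              refine Finset.sum_le_sum fun i _ => ?_
              rw [← Finset.sum_sub_distrib]
              calc |∑ j, (v i * v j * ∑ n : Fin N, (ω (x n) * (volume Ω).toReal / N)
                      * eval (x n) (πN N₀ i) * eval (x n) (πN N₀ j)
                    - v i * v j * ∫ y in Ω, eval y (πN N₀ i) * eval y (πN N₀ j) * ω y)|
                  ≤ ∑ j, |v i * v j * ∑ n : Fin N, (ω (x n) * (volume Ω).toReal / N)
                      * eval (x n) (πN N₀ i) * eval (x n) (πN N₀ j)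
                    - v i * v j * ∫ y in Ω, eval y (πN N₀ i) * eval y (πN N₀ j) * ω y| :=
                    Finset.abs_sum_le_sum_abs _ _
                _ ≤ ∑ j : Fin K, (∑ i', (v i') ^ 2) * εG := by
                    refine Finset.sum_le_sum fun j _ => ?_
                    rw [← mul_sub, abs_mul]
                    exact mul_le_mul (hvv i j) (hG_N i j) (abs_nonneg _) hsnn
                _ = ((∑ i', (v i') ^ 2) * εG) * K := by
                    rw [Finset.sum_const, Finset.card_univ, Fintype.card_fin, nsmul_eq_mul]
                    ring
          _ = ((∑ i', (v i') ^ 2) * εG) * K * K := by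
              rw [Finset.sum_const, Finset.card_univ, Fintype.card_fin, nsmul_eq_mul]
              ring
          _ ≤ (c₀ / 2) * ∑ i', (v i') ^ 2 := by
              have hscal : εG * ((K : ℝ) * (K : ℝ)) ≤ c₀ / 2 := by
                rw [hεG, div_mul_eq_mul_div, div_le_div_iff₀ (by positivity) (by norm_num)]
                nlinarith [hc₀.le, sq_nonneg ((K : ℝ))]
              calc ((∑ i', (v i') ^ 2) * εG) * K * K
                  = (εG * ((K : ℝ) * (K : ℝ))) * ∑ i', (v i') ^ 2 := by ring
                _ ≤ (c₀ / 2) * ∑ i', (v i') ^ 2 :=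
                    mul_le_mul_of_nonneg_right hscal hsnn
      have hG := hcoer v
      have h1 := (abs_le.mp hdiff).1
      linarith
    -- coordinates of the level-N basis in the reference basis
    choose A hA using hrepN N hNN₀
    have horthg : ∀ k l : Fin K, (∑ i, ∑ j, A k i * A l j
        * ∑ n : Fin N, (ω (x n) * (volume Ω).toReal / N)
          * eval (x n) (πN N₀ i) * eval (x n) (πN N₀ j)) = if k = l then 1 else 0 := by
      intro k l
      rw [← hgexp N (A k) (A l), hA k, hA l]
      exact hπorth N hNN₀ k l
    have hsA : ∀ k, ∑ j, (A k j) ^ 2 ≤ S₀ := by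
      intro k
      have h1 := hcoerN (A k)
      have h2 := horthg k k
      rw [if_pos rfl] at h2
      rw [h2] at h1
      rw [hS₀, le_div_iff₀ hc₀]
      nlinarith
    have habs : ∀ k j, |A k j| ≤ Real.sqrt S₀ := by
      intro k j
      have h1 : (A k j) ^ 2 ≤ S₀ :=
        le_trans (Finset.single_le_sum (fun j' _ => sq_nonneg (A k j'))
          (Finset.mem_univ j)) (hsA k)
      calc |A k j| = Real.sqrt ((A k j) ^ 2) := (Real.sqrt_sq_eq_abs _).symm
        _ ≤ Real.sqrt S₀ := Real.sqrt_le_sqrt h1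
    -- decomposition of the integrals and discrete functionals
    have hIdec : ∀ k, (∫ y in Ω, eval y (πN N k) * ω y)
        = ∑ j, A k j * ∫ y in Ω, eval y (πN N₀ j)
            * eval y (1 : MvPolynomial (Fin q) ℝ) * ω y := by
      intro k
      rw [← hA k]
      have hpt : ∀ y : Fin q → ℝ, eval y (∑ j, A k j • πN N₀ j) * ω y
          = ∑ j, A k j * (eval y (πN N₀ j) * eval y (1 : MvPolynomial (Fin q) ℝ) * ω y) := by
        intro y
        rw [eval_sum_smul, Finset.sum_mul]
        refine Finset.sum_congr rfl fun j _ => ?_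
        rw [map_one]
        ring
      rw [integral_congr_ae (ae_of_all _ hpt),
        integral_finset_sum _ (fun j _ => (hIntP (πN N₀ j) 1).const_mul _)]
      exact Finset.sum_congr rfl fun j _ => integral_const_mul _ _
    have hddec : ∀ k, (∑ n' : Fin N, (ω (x n') * (volume Ω).toReal / N)
          * eval (x n') (πN N k) * eval (x n') (1 : MvPolynomial (Fin q) ℝ))
        = ∑ j, A k j * ∑ n' : Fin N, (ω (x n') * (volume Ω).toReal / N)
          * eval (x n') (πN N₀ j) * eval (x n') (1 : MvPolynomial (Fin q) ℝ) := by
      intro k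
      rw [← hA k]
      rw [show (∑ n' : Fin N, (ω (x n') * (volume Ω).toReal / N)
            * eval (x n') (∑ j, A k j • πN N₀ j) * eval (x n') (1 : MvPolynomial (Fin q) ℝ))
          = ∑ n' : Fin N, (ω (x n') * (volume Ω).toReal / N)
            * (∑ j, A k j * eval (x n') (πN N₀ j)) * eval (x n') (1 : MvPolynomial (Fin q) ℝ)
          from Finset.sum_congr rfl fun n' _ => by rw [eval_sum_smul]]
      exact sum_expand_left _ _ _ _
    -- the discrete projection identity
    obtain ⟨u, hu⟩ := honeN N hNN₀
    have hproj : ∀ k, (∑ n' : Fin N, (ω (x n') * (volume Ω).toReal / N)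
        * eval (x n') (πN N k) * eval (x n') (1 : MvPolynomial (Fin q) ℝ)) = u k := by
      intro k
      conv_lhs => rw [← hu]
      rw [show (∑ n' : Fin N, (ω (x n') * (volume Ω).toReal / N)
            * eval (x n') (πN N k) * eval (x n') (∑ l, u l • πN N l))
          = ∑ n' : Fin N, (ω (x n') * (volume Ω).toReal / N)
            * eval (x n') (πN N k) * (∑ l, u l * eval (x n') (πN N l))
          from Finset.sum_congr rfl fun n' _ => by rw [eval_sum_smul]]
      rw [sum_expand_right]
      calc (∑ l, u l * ∑ n' : Fin N, (ω (x n') * (volume Ω).toReal / N)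
            * eval (x n') (πN N k) * eval (x n') (πN N l))
          = ∑ l, u l * if k = l then 1 else 0 := by
            refine Finset.sum_congr rfl fun l _ => ?_
            rw [hπorth N hNN₀ k l]
        _ = u k := by simp
    have hkey : (∑ k, eval (x n) (πN N k)
        * ∑ n' : Fin N, (ω (x n') * (volume Ω).toReal / N)
          * eval (x n') (πN N k) * eval (x n') (1 : MvPolynomial (Fin q) ℝ)) = 1 := by
      calc (∑ k, eval (x n) (πN N k)
            * ∑ n' : Fin N, (ω (x n') * (volume Ω).toReal / N)
              * eval (x n') (πN N k) * eval (x n') (1 : MvPolynomial (Fin q) ℝ))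
          = ∑ k, u k * eval (x n) (πN N k) := by
            refine Finset.sum_congr rfl fun k _ => ?_
            rw [hproj k]
            ring
        _ = eval (x n) (∑ k, u k • πN N k) := (eval_sum_smul _ _ _).symm
        _ = 1 := by rw [hu, map_one]
    -- the error terms
    have hEkbound : ∀ k, |(∫ y in Ω, eval y (πN N k) * ω y)
        - ∑ n' : Fin N, (ω (x n') * (volume Ω).toReal / N)
          * eval (x n') (πN N k) * eval (x n') (1 : MvPolynomial (Fin q) ℝ)|
        ≤ (K : ℝ) * (Real.sqrt S₀ * εb) := by
      intro k
      rw [hIdec k, hddec k, ← Finset.sum_sub_distrib]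
      calc |∑ j, (A k j * (∫ y in Ω, eval y (πN N₀ j)
              * eval y (1 : MvPolynomial (Fin q) ℝ) * ω y)
            - A k j * ∑ n' : Fin N, (ω (x n') * (volume Ω).toReal / N)
              * eval (x n') (πN N₀ j) * eval (x n') (1 : MvPolynomial (Fin q) ℝ))|
          ≤ ∑ j, |A k j * (∫ y in Ω, eval y (πN N₀ j)
              * eval y (1 : MvPolynomial (Fin q) ℝ) * ω y)
            - A k j * ∑ n' : Fin N, (ω (x n') * (volume Ω).toReal / N)
              * eval (x n') (πN N₀ j) * eval (x n') (1 : MvPolynomial (Fin q) ℝ)| :=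
            Finset.abs_sum_le_sum_abs _ _
        _ ≤ ∑ _j : Fin K, Real.sqrt S₀ * εb := by
            refine Finset.sum_le_sum fun j _ => ?_
            rw [← mul_sub, abs_mul]
            refine mul_le_mul (habs k j) ?_ (abs_nonneg _) (Real.sqrt_nonneg _)
            rw [abs_sub_comm]
            exact hb_N j
        _ = (K : ℝ) * (Real.sqrt S₀ * εb) := by
            rw [Finset.sum_const, Finset.card_univ, Fintype.card_fin, nsmul_eq_mul]
    have hπbound : ∀ k, |eval (x n) (πN N k)| ≤ (K : ℝ) * (Real.sqrt S₀ * M) := by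
      intro k
      rw [← hA k, eval_sum_smul]
      calc |∑ j, A k j * eval (x n) (πN N₀ j)|
          ≤ ∑ j, |A k j * eval (x n) (πN N₀ j)| := Finset.abs_sum_le_sum_abs _ _
        _ ≤ ∑ _j : Fin K, Real.sqrt S₀ * M := by
            refine Finset.sum_le_sum fun j _ => ?_
            rw [abs_mul]
            exact mul_le_mul (habs k j) (hMb j _ (hx n)) (abs_nonneg _) (Real.sqrt_nonneg _)
        _ = (K : ℝ) * (Real.sqrt S₀ * M) := by
            rw [Finset.sum_const, Finset.card_univ, Fintype.card_fin, nsmul_eq_mul]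
    -- final assembly
    have hsplit : (∑ k, eval (x n) (πN N k) * ∫ y in Ω, eval y (πN N k) * ω y)
        = 1 + ∑ k, eval (x n) (πN N k)
          * ((∫ y in Ω, eval y (πN N k) * ω y)
            - ∑ n' : Fin N, (ω (x n') * (volume Ω).toReal / N)
              * eval (x n') (πN N k) * eval (x n') (1 : MvPolynomial (Fin q) ℝ)) := by
      rw [← hkey, ← Finset.sum_add_distrib]
      refine Finset.sum_congr rfl fun k _ => ?_
      ring
    have herr : |∑ k, eval (x n) (πN N k)
        * ((∫ y in Ω, eval y (πN N k) * ω y)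
          - ∑ n' : Fin N, (ω (x n') * (volume Ω).toReal / N)
            * eval (x n') (πN N k) * eval (x n') (1 : MvPolynomial (Fin q) ℝ))| ≤ T * εb := by
      calc |∑ k, eval (x n) (πN N k)
            * ((∫ y in Ω, eval y (πN N k) * ω y)
              - ∑ n' : Fin N, (ω (x n') * (volume Ω).toReal / N)
                * eval (x n') (πN N k) * eval (x n') (1 : MvPolynomial (Fin q) ℝ))|
          ≤ ∑ k, |eval (x n) (πN N k)
            * ((∫ y in Ω, eval y (πN N k) * ω y)
              - ∑ n' : Fin N, (ω (x n') * (volume Ω).toReal / N)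
                * eval (x n') (πN N k) * eval (x n') (1 : MvPolynomial (Fin q) ℝ))| :=
            Finset.abs_sum_le_sum_abs _ _
        _ ≤ ∑ _k : Fin K, ((K : ℝ) * (Real.sqrt S₀ * M)) * ((K : ℝ) * (Real.sqrt S₀ * εb)) := by
            refine Finset.sum_le_sum fun k _ => ?_
            rw [abs_mul]
            exact mul_le_mul (hπbound k) (hEkbound k) (abs_nonneg _) (by positivity)
        _ = (K : ℝ) * (((K : ℝ) * (Real.sqrt S₀ * M)) * ((K : ℝ) * (Real.sqrt S₀ * εb))) := by
            rw [Finset.sum_const, Finset.card_univ, Fintype.card_fin, nsmul_eq_mul]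
        _ = T * εb := by
            have hss : Real.sqrt S₀ * Real.sqrt S₀ = S₀ := Real.mul_self_sqrt hS₀pos.le
            rw [hT]
            calc (K : ℝ) * (((K : ℝ) * (Real.sqrt S₀ * M)) * ((K : ℝ) * (Real.sqrt S₀ * εb)))
                = M * (K : ℝ) ^ 3 * (Real.sqrt S₀ * Real.sqrt S₀) * εb := by ring
              _ = M * (K : ℝ) ^ 3 * S₀ * εb := by rw [hss]
    have hTεb : T * εb < 1 := by
      rw [hεb, mul_one_div]
      exact (div_lt_one (by linarith)).mpr (by linarith)
    have herr' := (abs_le.mp herr).1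
    refine mul_nonneg (hr N n) ?_
    rw [hsplit]
    linarith
end

section
/- Under the assumptions of the previous theorem (convergence of the discrete inner product on ℙ_d(ℝ^q) and unisolvency of X_{N₀}), there exists N₁ such that for all N ≥ N₁ the ℓ¹ cubature formula with degree of exactness d, whose weights minimize ‖w‖_1 over { w : P w = m }, is perfectly stable, i.e., κ(w^{ℓ1}) = I[1]. -/
open MvPolynomial MeasureTheory Filter

set_option synthInstance.maxHeartbeats 1000000
set_option maxHeartbeats 1000000

lemma mv_zero_set_null : ∀ {q : ℕ} (p : MvPolynomial (Fin q) ℝ), p ≠ 0 →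
    volume {y : Fin q → ℝ | MvPolynomial.eval y p = 0} = 0 := by
  intro q
  induction q with
  | zero =>
    intro p hp
    obtain ⟨c, rfl⟩ := MvPolynomial.C_surjective (Fin 0) p
    have hc : c ≠ 0 := by simpa using hp
    convert measure_empty
    · ext y; simp [hc]
    · infer_instance
  | succ n ih =>
    intro p hp
    set P := MvPolynomial.finSuccEquiv ℝ n p with hPdef
    have hP0 : P ≠ 0 := by
      simp only [hPdef, ne_eq, EmbeddingLike.map_eq_zero_iff]
      exact hp
    obtain ⟨k, hk⟩ : ∃ k, P.coeff k ≠ 0 := by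
      by_contra h
      push_neg at h
      exact hP0 (Polynomial.ext fun m => by simp [h m])
    have hconsc : Continuous fun z : (Fin n → ℝ) × ℝ => (Fin.cons z.2 z.1 : Fin (n+1) → ℝ) := by
      apply continuous_pi
      intro i
      refine Fin.cases ?_ ?_ i
      · simpa using continuous_snd
      · intro j; simp only [Fin.cons_succ]; exact (continuous_apply j).comp continuous_fst
    have hcont : Continuous fun z : (Fin n → ℝ) × ℝ => MvPolynomial.eval (Fin.cons z.2 z.1) p :=
      (MvPolynomial.continuous_eval p).comp hconsc
    set Z'' : Set ((Fin n → ℝ) × ℝ) :=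
      {z | MvPolynomial.eval (Fin.cons z.2 z.1) p = 0} with hZdef
    have hmeas : MeasurableSet Z'' :=
      hcont.measurable (MeasurableSet.singleton 0)
    have hZ'' : (volume.prod volume) Z'' = 0 := by
      rw [MeasureTheory.Measure.measure_prod_null hmeas]
      have hgood : ∀ᵐ s : Fin n → ℝ, MvPolynomial.eval s (P.coeff k) ≠ 0 := by
        rw [ae_iff]
        simpa using ih (P.coeff k) hk
      filter_upwards [hgood] with s hs
      have hfin : {a : ℝ | Polynomial.IsRoot (P.map (MvPolynomial.eval s)) a}.Finite := by
        apply Polynomial.finite_setOf_isRoot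
        intro h
        apply hs
        have := congrArg (fun r => Polynomial.coeff r k) h
        simpa using this
      refine measure_mono_null ?_ (hfin.measure_zero volume)
      intro a ha
      simp only [Set.mem_preimage, hZdef, Set.mem_setOf_eq] at ha
      have := MvPolynomial.eval_eq_eval_mv_eval' s a p
      simp only [Set.mem_setOf_eq, Polynomial.IsRoot]
      rw [← this, ha]
    -- transfer to the pi type
    have e := MeasureTheory.volume_preserving_piFinSuccAbove (fun _ : Fin (n+1) => ℝ) 0
    have hswap : MeasurableSet (Prod.swap ⁻¹' Z'' : Set (ℝ × (Fin n → ℝ))) :=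
      hmeas.preimage measurable_swap
    have hcons : ∀ y : Fin (n+1) → ℝ,
        (Fin.cons ((MeasurableEquiv.piFinSuccAbove (fun _ : Fin (n+1) => ℝ) 0) y).1
          ((MeasurableEquiv.piFinSuccAbove (fun _ : Fin (n+1) => ℝ) 0) y).2 : Fin (n+1) → ℝ)
          = y := by
      intro y
      show (Fin.cons (y 0) (fun j => y (Fin.succAbove 0 j)) : Fin (n+1) → ℝ) = y
      have h2 : (fun j => y (Fin.succAbove 0 j)) = Fin.tail y := by
        funext j
        rw [Fin.succAbove_zero]
        rfl
      rw [h2, Fin.cons_self_tail]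
    have key : {y : Fin (n+1) → ℝ | MvPolynomial.eval y p = 0}
        = (MeasurableEquiv.piFinSuccAbove (fun _ : Fin (n+1) => ℝ) 0) ⁻¹' (Prod.swap ⁻¹' Z'') := by
      ext y
      simp only [Set.mem_setOf_eq, Set.mem_preimage, hZdef, Prod.fst_swap, Prod.snd_swap]
      rw [hcons y]
    rw [key, e.measure_preimage hswap.nullMeasurableSet]
    calc (volume : Measure (ℝ × (Fin n → ℝ))) (Prod.swap ⁻¹' Z'')
        = Measure.map Prod.swap (volume.prod volume) Z'' := by
          rw [Measure.map_apply measurable_swap hmeas]; rfl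
      _ = (volume.prod volume) Z'' := by rw [Measure.prod_swap]
      _ = 0 := hZ''

/-- Corollary to the main theorem: under the same assumptions, the
`ℓ¹`-cubature formula with degree of exactness `d` (whose weights minimize
`‖w‖₁` among all weight vectors satisfying the exactness conditions) is
perfectly stable, i.e. `κ(w^{ℓ1}) = I[1]`, for all sufficiently large `N`. -/
theorem l1_CF_eventually_perfectly_stable (q d N₀ : ℕ)
    (Ω : Set (Fin q → ℝ)) (hΩ : MeasurableSet Ω)
    (hbdd : Bornology.IsBounded Ω)
    (hvol : 0 < (MeasureTheory.volume Ω).toReal)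
    (ω : (Fin q → ℝ) → ℝ) (hω : ∀ y ∈ Ω, 0 ≤ ω y) (hωint : IntegrableOn ω Ω)
    (hI : 0 < ∫ y in Ω, ω y)
    (x : ℕ → (Fin q → ℝ)) (hx : ∀ n, x n ∈ Ω)
    (huni : ∀ f ∈ restrictTotalDegree (Fin q) ℝ d,
      (∀ n < N₀, eval (x n) f = 0) → f = 0)
    (hωpos : ∀ n < N₀, 0 < ω (x n))
    (hconv : ∀ f ∈ restrictTotalDegree (Fin q) ℝ d,
      ∀ g ∈ restrictTotalDegree (Fin q) ℝ d,
      Tendsto (fun N : ℕ => ∑ n : Fin N,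
          (ω (x n) * (MeasureTheory.volume Ω).toReal / N)
            * eval (x n) f * eval (x n) g)
        atTop (nhds (∫ y in Ω, eval y f * eval y g * ω y))) :
    ∃ N₁ ≥ N₀, ∀ N ≥ N₁, ∀ w : Fin N → ℝ,
      -- w satisfies the exactness conditions of degree d
      (∀ f ∈ restrictTotalDegree (Fin q) ℝ d,
        (∑ n, w n * eval (x n) f) = ∫ y in Ω, eval y f * ω y) →
      -- w minimizes ‖·‖₁ among all such weight vectors
      (∀ v : Fin N → ℝ,
        (∀ f ∈ restrictTotalDegree (Fin q) ℝ d,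
          (∑ n, v n * eval (x n) f) = ∫ y in Ω, eval y f * ω y) →
        ∑ n, |w n| ≤ ∑ n, |v n|) →
      ∑ n, |w n| = ∫ y in Ω, ω y := by
  classical
  have h1V : (1 : MvPolynomial (Fin q) ℝ) ∈ restrictTotalDegree (Fin q) ℝ d := by
    rw [MvPolynomial.mem_restrictTotalDegree]
    simp [MvPolynomial.totalDegree_one]
  -- a bound for polynomials on Ω
  have hbound : ∀ p : MvPolynomial (Fin q) ℝ, ∃ C : ℝ, 0 ≤ C ∧
      ∀ y ∈ Ω, |MvPolynomial.eval y p| ≤ C := by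
    intro p
    obtain ⟨C, hC⟩ := hbdd.isCompact_closure.exists_bound_of_continuousOn
      ((MvPolynomial.continuous_eval p).continuousOn)
    refine ⟨max C 0, le_max_right _ _, fun y hy => ?_⟩
    have := hC y (subset_closure hy)
    rw [Real.norm_eq_abs] at this
    exact this.trans (le_max_left _ _)
  -- integrability of (eval p) * ω on Ω
  have hint : ∀ p : MvPolynomial (Fin q) ℝ,
      IntegrableOn (fun y => MvPolynomial.eval y p * ω y) Ω := by
    intro p
    obtain ⟨C, hC0, hC⟩ := hbound p
    refine Integrable.bdd_mul (c := C) hωint ((MvPolynomial.continuous_eval p).aestronglyMeasurable) ?_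
    refine ae_restrict_of_forall_mem hΩ ?_
    intro y hy
    rw [Real.norm_eq_abs]
    exact hC y hy
  have hN₀pos : 0 < N₀ :=
    Nat.pos_of_ne_zero fun h => one_ne_zero (huni 1 h1V (by simp [h]))
  -- finite basis of the polynomial space
  set M := Module.finrank ℝ (restrictTotalDegree (Fin q) ℝ d) with hMdef
  let b : Module.Basis (Fin M) ℝ (restrictTotalDegree (Fin q) ℝ d) :=
    Module.finBasis ℝ (restrictTotalDegree (Fin q) ℝ d)
  set E : Fin M → MvPolynomial (Fin q) ℝ := fun i => (b i : MvPolynomial (Fin q) ℝ) with hEdef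
  have hE : ∀ i, E i ∈ restrictTotalDegree (Fin q) ℝ d := fun i => (b i).2
  -- evaluation of linear combinations
  have hevalsum : ∀ (c : Fin M → ℝ) (F : Fin M → MvPolynomial (Fin q) ℝ) (y : Fin q → ℝ),
      MvPolynomial.eval y (∑ j, c j • F j) = ∑ j, c j * MvPolynomial.eval y (F j) := by
    intro c F y
    rw [map_sum]
    exact Finset.sum_congr rfl fun j _ => by
      rw [MvPolynomial.smul_eq_C_mul, map_mul, MvPolynomial.eval_C]
  -- linearity of the moment functional
  have hIlin : ∀ (c : Fin M → ℝ) (F : Fin M → MvPolynomial (Fin q) ℝ),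
      (∫ y in Ω, MvPolynomial.eval y (∑ j, c j • F j) * ω y)
        = ∑ j, c j * ∫ y in Ω, MvPolynomial.eval y (F j) * ω y := by
    intro c F
    calc (∫ y in Ω, MvPolynomial.eval y (∑ j, c j • F j) * ω y)
        = ∫ y in Ω, ∑ j, c j * (MvPolynomial.eval y (F j) * ω y) := by
          refine integral_congr_ae (Filter.Eventually.of_forall fun y => ?_)
          show MvPolynomial.eval y (∑ j, c j • F j) * ω y
            = ∑ j, c j * (MvPolynomial.eval y (F j) * ω y)
          rw [hevalsum, Finset.sum_mul]
          exact Finset.sum_congr rfl fun j _ => (mul_assoc _ _ _)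
      _ = ∑ j, ∫ y in Ω, c j * (MvPolynomial.eval y (F j) * ω y) :=
          integral_finset_sum _ (fun j _ => (hint (F j)).const_mul _)
      _ = ∑ j, c j * ∫ y in Ω, MvPolynomial.eval y (F j) * ω y := by
          exact Finset.sum_congr rfl fun j _ => integral_const_mul _ _
  have hpair : ∀ (c : Fin M → ℝ) (p : MvPolynomial (Fin q) ℝ),
      (∑ j, c j * ∫ y in Ω, MvPolynomial.eval y (p * E j) * ω y)
      = ∫ y in Ω, MvPolynomial.eval y (p * ∑ j, c j • E j) * ω y := by
    intro c p
    rw [← hIlin c (fun j => p * E j)]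
    have : (∑ j, c j • (p * E j)) = p * ∑ j, c j • E j := by
      rw [Finset.mul_sum]
      exact Finset.sum_congr rfl fun j _ => (mul_smul_comm _ _ _).symm
    rw [this]
  -- matrices
  set m : Fin M → ℝ := fun j => ∫ y in Ω, MvPolynomial.eval y (E j) * ω y with hmdef
  set Gi : Matrix (Fin M) (Fin M) ℝ := Matrix.of fun i j =>
    ∫ y in Ω, MvPolynomial.eval y (E i) * MvPolynomial.eval y (E j) * ω y with hGidef
  set G : ℕ → Matrix (Fin M) (Fin M) ℝ := fun N => Matrix.of fun i j =>
    ∑ n : Fin N, (ω (x n) * (MeasureTheory.volume Ω).toReal / N)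
      * MvPolynomial.eval (x n) (E i) * MvPolynomial.eval (x n) (E j) with hGdef
  have hmv : ∀ (A : Matrix (Fin M) (Fin M) ℝ) (v : Fin M → ℝ) (i),
      A.mulVec v i = ∑ j, A i j * v j := fun A v i => rfl
  have hGiI : ∀ i j, Gi i j = ∫ y in Ω, MvPolynomial.eval y (E i * E j) * ω y := by
    intro i j
    show (∫ y in Ω, MvPolynomial.eval y (E i) * MvPolynomial.eval y (E j) * ω y) = _
    simp only [map_mul]
  have hGconv : ∀ i j, Tendsto (fun N => G N i j) atTop (nhds (Gi i j)) :=
    fun i j => hconv (E i) (hE i) (E j) (hE j)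
  -- the coefficient vector of the constant 1
  set u : Fin M → ℝ := fun j => b.repr ⟨1, h1V⟩ j with hudef
  have husum : (∑ j, u j • E j) = (1 : MvPolynomial (Fin q) ℝ) := by
    have h := congrArg (Subtype.val) (b.sum_repr ⟨1, h1V⟩)
    rw [Submodule.coe_sum] at h
    simpa only [Submodule.coe_smul] using h
  have hGu : Gi.mulVec u = m := by
    funext i
    rw [hmv]
    calc ∑ j, Gi i j * u j
        = ∑ j, u j * ∫ y in Ω, MvPolynomial.eval y (E i * E j) * ω y := by
          exact Finset.sum_congr rfl fun j _ => by rw [hGiI, mul_comm]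
      _ = ∫ y in Ω, MvPolynomial.eval y (E i * ∑ j, u j • E j) * ω y := hpair u (E i)
      _ = m i := by rw [husum, mul_one]
  -- the limit Gram matrix is invertible
  have hGidet : Gi.det ≠ 0 := by
    intro hdet
    obtain ⟨c, hc0, hGc⟩ := (Matrix.exists_mulVec_eq_zero_iff).mpr hdet
    set r : MvPolynomial (Fin q) ℝ := ∑ j, c j • E j with hrdef
    have hrne : r ≠ 0 := by
      intro h0
      apply hc0
      have hz : (∑ j, c j • b j) = (0 : restrictTotalDegree (Fin q) ℝ d) := by
        apply Subtype.ext
        have : ((∑ j, c j • b j : restrictTotalDegree (Fin q) ℝ d) : MvPolynomial (Fin q) ℝ)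
            = ∑ j, c j • E j := by
          simp [hEdef]
        rw [this, ← hrdef, h0]
        rfl
      have := Fintype.linearIndependent_iff.mp b.linearIndependent c hz
      funext j
      exact this j
    have hzero : ∀ j, (∫ y in Ω, MvPolynomial.eval y (E j * r) * ω y) = 0 := by
      intro j
      rw [hrdef, ← hpair c (E j)]
      have h2 : ∀ i, (∫ y in Ω, MvPolynomial.eval y (E j * E i) * ω y) = Gi j i :=
        fun i => (hGiI j i).symm
      calc ∑ i, c i * ∫ y in Ω, MvPolynomial.eval y (E j * E i) * ω y
          = ∑ i, Gi j i * c i := Finset.sum_congr rfl fun i _ => by rw [h2, mul_comm]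
        _ = Gi.mulVec c j := (hmv Gi c j).symm
        _ = 0 := by rw [hGc]; rfl
    have hq : (∫ y in Ω, MvPolynomial.eval y (r * r) * ω y) = 0 := by
      have h := hpair c r
      rw [← hrdef] at h
      rw [← h]
      refine Finset.sum_eq_zero fun j _ => ?_
      rw [mul_comm r (E j)] at *
      rw [hzero j, mul_zero]
    have hnn : 0 ≤ᵐ[volume.restrict Ω] fun y => MvPolynomial.eval y (r * r) * ω y := by
      refine ae_restrict_of_forall_mem hΩ fun y hy => ?_
      show (0:ℝ) ≤ MvPolynomial.eval y (r * r) * ω y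
      rw [map_mul]
      exact mul_nonneg (mul_self_nonneg _) (hω y hy)
    have hae : (fun y => MvPolynomial.eval y (r * r) * ω y) =ᵐ[volume.restrict Ω] 0 :=
      (integral_eq_zero_iff_of_nonneg_ae hnn (hint (r * r))).mp hq
    have hrne' : ∀ᵐ y ∂(volume.restrict Ω), MvPolynomial.eval y r ≠ 0 := by
      refine ae_restrict_of_ae ?_
      rw [ae_iff]
      simpa using mv_zero_set_null r hrne
    have hω0 : ω =ᵐ[volume.restrict Ω] 0 := by
      filter_upwards [hae, hrne'] with y h1 h2
      have hne : MvPolynomial.eval y (r * r) ≠ 0 := by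
        rw [map_mul]; exact mul_ne_zero h2 h2
      have h1' : MvPolynomial.eval y (r * r) * ω y = 0 := h1
      rcases mul_eq_zero.mp h1' with h | h
      · exact absurd h hne
      · exact h
    have : (∫ y in Ω, ω y) = 0 := by
      rw [integral_congr_ae hω0]
      simp
    exact hI.ne' this
  -- convergence of the Gram matrices and of the LS coefficient vectors
  have hGtend : Tendsto G atTop (nhds Gi) := by
    refine tendsto_pi_nhds.mpr ?_
    intro i
    rw [tendsto_pi_nhds]
    intro j
    exact hGconv i j
  have hdet_t : Tendsto (fun N => (G N).det) atTop (nhds Gi.det) :=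
    ((Continuous.matrix_det continuous_id).tendsto Gi).comp hGtend
  have hadj_t : Tendsto (fun N => (G N).adjugate) atTop (nhds Gi.adjugate) :=
    ((Continuous.matrix_adjugate continuous_id).tendsto Gi).comp hGtend
  set cvec : ℕ → Fin M → ℝ := fun N => ((G N).det)⁻¹ • ((G N).adjugate.mulVec m) with hcvecdef
  have hlim_eq : (Gi.det)⁻¹ • (Gi.adjugate.mulVec m) = u := by
    rw [← hGu, Matrix.mulVec_mulVec, Matrix.adjugate_mul, Matrix.smul_mulVec,
      Matrix.one_mulVec, smul_smul, inv_mul_cancel₀ hGidet, one_smul]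
  have hc_t : Tendsto cvec atTop (nhds u) := by
    have hinv : Tendsto (fun N => ((G N).det)⁻¹) atTop (nhds (Gi.det)⁻¹) := hdet_t.inv₀ hGidet
    have hmvt : Tendsto (fun N => (G N).adjugate.mulVec m) atTop
        (nhds (Gi.adjugate.mulVec m)) := by
      rw [tendsto_pi_nhds]
      intro i
      simp only [hmv]
      refine tendsto_finset_sum _ fun j _ => ?_
      exact ((tendsto_pi_nhds.mp ((tendsto_pi_nhds.mp hadj_t) i)) j).mul_const (m j)
    rw [← hlim_eq, tendsto_pi_nhds]
    intro i
    have h := hinv.mul ((tendsto_pi_nhds.mp hmvt) i)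
    simpa [hcvecdef, Pi.smul_apply, smul_eq_mul] using h
  -- uniform bounds for the basis polynomials on Ω
  choose C hC0 hC using fun j => hbound (E j)
  set D : ℝ := ∑ j, C j with hD
  have hD0 : 0 ≤ D := Finset.sum_nonneg fun j _ => hC0 j
  set ε : ℝ := 1 / (2 * (D + 1)) with hε
  have hεpos : 0 < ε := by positivity
  have hev : ∀ᶠ N in atTop, ((G N).det ≠ 0 ∧ ∀ j, |cvec N j - u j| < ε) := by
    refine (hdet_t.eventually_ne hGidet).and ?_
    rw [eventually_all]
    intro j
    have hj : Tendsto (fun N => cvec N j) atTop (nhds (u j)) := (tendsto_pi_nhds.mp hc_t) j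
    have habs : Tendsto (fun N => |cvec N j - u j|) atTop (nhds 0) := by
      have := (hj.sub_const (u j)).abs
      simpa using this
    exact habs.eventually_lt_const hεpos
  obtain ⟨N₂, hN₂⟩ := eventually_atTop.mp hev
  refine ⟨max N₀ N₂, le_max_left _ _, ?_⟩
  intro N hN w hw hminw
  have hNN₀ : N₀ ≤ N := le_trans (le_max_left _ _) hN
  have hN2 : N₂ ≤ N := le_trans (le_max_right _ _) hN
  obtain ⟨hdetN, hcb⟩ := hN₂ N hN2
  -- the least-squares polynomial s and weights v
  set s : MvPolynomial (Fin q) ℝ := ∑ j, cvec N j • E j with hsdef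
  have hGNc : (G N).mulVec (cvec N) = m := by
    show (G N).mulVec (((G N).det)⁻¹ • ((G N).adjugate.mulVec m)) = m
    rw [Matrix.mulVec_smul, Matrix.mulVec_mulVec, Matrix.mul_adjugate,
      Matrix.smul_mulVec, Matrix.one_mulVec, smul_smul, inv_mul_cancel₀ hdetN, one_smul]
  have hseval : ∀ y, MvPolynomial.eval y s = ∑ j, cvec N j * MvPolynomial.eval y (E j) :=
    fun y => by rw [hsdef]; exact hevalsum _ _ y
  have honeeval : ∀ y : Fin q → ℝ, (∑ j, u j * MvPolynomial.eval y (E j)) = 1 := by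
    intro y
    have h := congrArg (MvPolynomial.eval y) husum
    rw [hevalsum] at h
    simpa using h
  have hslow : ∀ y ∈ Ω, (1:ℝ)/2 ≤ MvPolynomial.eval y s := by
    intro y hy
    have hdiff : MvPolynomial.eval y s - 1
        = ∑ j, (cvec N j - u j) * MvPolynomial.eval y (E j) := by
      rw [hseval y, ← honeeval y, ← Finset.sum_sub_distrib]
      exact Finset.sum_congr rfl fun j _ => by ring
    have habs : |MvPolynomial.eval y s - 1| ≤ ε * D := by
      rw [hdiff]
      calc |∑ j, (cvec N j - u j) * MvPolynomial.eval y (E j)|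
          ≤ ∑ j, |(cvec N j - u j) * MvPolynomial.eval y (E j)| :=
            Finset.abs_sum_le_sum_abs _ _
        _ ≤ ∑ j, ε * C j := by
            refine Finset.sum_le_sum fun j _ => ?_
            rw [abs_mul]
            exact mul_le_mul (le_of_lt (hcb j)) (hC j y hy) (abs_nonneg _) (le_of_lt hεpos)
        _ = ε * D := by rw [hD, Finset.mul_sum]
    have hεD : ε * D < 1/2 := by
      rw [hε]
      have h1 : (0:ℝ) < 2*(D+1) := by linarith
      rw [div_mul_eq_mul_div, one_mul, div_lt_div_iff₀ h1 (by norm_num : (0:ℝ) < 2)]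
      linarith
    have h2 : |MvPolynomial.eval y s - 1| < 1/2 := lt_of_le_of_lt habs hεD
    have h3 := (abs_lt.mp h2).1
    linarith
  set v : Fin N → ℝ := fun n =>
    (ω (x n) * (MeasureTheory.volume Ω).toReal / N) * MvPolynomial.eval (x n) s with hvdef
  have hvnn : ∀ n : Fin N, 0 ≤ v n := by
    intro n
    have h1 : 0 ≤ ω (x n) := hω _ (hx n)
    have h2 : (0:ℝ) ≤ MvPolynomial.eval (x n) s :=
      le_trans (by norm_num) (hslow _ (hx n))
    have h3 : 0 ≤ ω (x n) * (MeasureTheory.volume Ω).toReal / N := by positivity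
    rw [hvdef]
    exact mul_nonneg h3 h2
  have hvE : ∀ i, (∑ n : Fin N, v n * MvPolynomial.eval (x n) (E i)) = m i := by
    intro i
    have h1 : (∑ n : Fin N, v n * MvPolynomial.eval (x n) (E i))
        = ∑ j, (G N) i j * cvec N j := by
      calc (∑ n : Fin N, v n * MvPolynomial.eval (x n) (E i))
          = ∑ n : Fin N, ∑ j, ((ω (x n) * (MeasureTheory.volume Ω).toReal / N)
              * MvPolynomial.eval (x n) (E i) * MvPolynomial.eval (x n) (E j)) * cvec N j := by
            refine Finset.sum_congr rfl fun n _ => ?_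
            simp only [hvdef]
            rw [hseval (x (n:ℕ)), Finset.mul_sum, Finset.sum_mul]
            exact Finset.sum_congr rfl fun j _ => by ring
        _ = ∑ j, ∑ n : Fin N, ((ω (x n) * (MeasureTheory.volume Ω).toReal / N)
              * MvPolynomial.eval (x n) (E i) * MvPolynomial.eval (x n) (E j)) * cvec N j :=
            Finset.sum_comm
        _ = ∑ j, (G N) i j * cvec N j := by
            refine Finset.sum_congr rfl fun j _ => ?_
            simp only [hGdef, Matrix.of_apply]
            rw [← Finset.sum_mul]
    rw [h1, ← hmv (G N) (cvec N) i, hGNc]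
  have hvexact : ∀ f ∈ restrictTotalDegree (Fin q) ℝ d,
      (∑ n : Fin N, v n * MvPolynomial.eval (x n) f)
        = ∫ y in Ω, MvPolynomial.eval y f * ω y := by
    intro f hf
    set a : Fin M → ℝ := fun j => b.repr ⟨f, hf⟩ j with hadef
    have hfsum : (∑ j, a j • E j) = f := by
      have h := congrArg (Subtype.val) (b.sum_repr ⟨f, hf⟩)
      rw [Submodule.coe_sum] at h
      simpa only [Submodule.coe_smul] using h
    calc (∑ n : Fin N, v n * MvPolynomial.eval (x n) f)
        = ∑ n : Fin N, ∑ j, a j * (v n * MvPolynomial.eval (x n) (E j)) := by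
          refine Finset.sum_congr rfl fun n _ => ?_
          rw [← hfsum, hevalsum, Finset.mul_sum]
          exact Finset.sum_congr rfl fun j _ => by ring
      _ = ∑ j, ∑ n : Fin N, a j * (v n * MvPolynomial.eval (x n) (E j)) := Finset.sum_comm
      _ = ∑ j, a j * m j := by
          refine Finset.sum_congr rfl fun j _ => ?_
          rw [← Finset.mul_sum, hvE j]
      _ = ∫ y in Ω, MvPolynomial.eval y f * ω y := by
          rw [← hfsum, hIlin a E]
  have hv1 : (∑ n : Fin N, v n) = ∫ y in Ω, ω y := by
    have h := hvexact 1 h1V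
    simpa using h
  have h1 := hminw v hvexact
  have h2 : (∑ n : Fin N, |v n|) = ∫ y in Ω, ω y := by
    rw [← hv1]
    exact Finset.sum_congr rfl fun n _ => abs_of_nonneg (hvnn n)
  have h3 : (∑ n : Fin N, w n) = ∫ y in Ω, ω y := by simpa using hw 1 h1V
  have h4 : (∑ n : Fin N, w n) ≤ ∑ n : Fin N, |w n| :=
    Finset.sum_le_sum fun n _ => le_abs_self _
  rw [h3] at h4
  rw [h2] at h1
  linarith
end
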